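/- arXiv:1709.07531 — 5 statements merged into one kernel-verified Lean document; each statement's English description precedes it below -/
import Mathlib

section
/- Let Q be an n×n complex matrix indexed by a finite set A whose spectral radius of |Q| (entrywise absolute values) is strictly less than 1. For x,y ∈ A define the Green's function G_A(x,y) = Σ_{k≥0} (Q^k)(x,y). Then for any enumeration A = {x_1,…,x_n}, the product Π_{j=1}^n G_{A_j}(x_j,x_j), where A_j = A \ {x_1,…,x_{j-1}} and G_{A_j} is the Green's function of Q restricted to A_j, is independent of the enumeration; i.e., for any permutation σ of {1,…,n}, Π_j G_{A_j^σ}(x_{σ(j)},x_{σ(j)}) = Π_j G_{A_j}(x_j,x_j). -/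
open scoped BigOperators

/-- The Green's function `G(x,y) = Σ_{k≥0} (M^k)(x,y)`. -/
noncomputable def green {A : Type*} [Fintype A] [DecidableEq A] (M : Matrix A A ℂ) (x y : A) : ℂ :=
  ∑' k : ℕ, (M ^ k) x y

/-- All eigenvalues of `M` have modulus strictly less than one. -/
def SpecLtOne {A : Type*} [Fintype A] [DecidableEq A] (M : Matrix A A ℂ) : Prop :=
  ∀ z ∈ spectrum ℂ M, ‖z‖ < 1

/-- Integrability: spectral radius of entrywise `|Q|` is `< 1`. -/
def IntegrableWeight {A : Type*} [Fintype A] [DecidableEq A] (Q : Matrix A A ℂ) : Prop :=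
  SpecLtOne (Matrix.of fun x y => (‖Q x y‖ : ℂ))

/-- The diagonal Green's function `G_B(x,x)` of the restriction of `Q` to `B`. -/
noncomputable def greenIn {A : Type*} [Fintype A] [DecidableEq A] (Q : Matrix A A ℂ)
    (B : Finset A) (x : A) : ℂ :=
  if h : x ∈ B then
    green (Q.submatrix (fun i : {a // a ∈ B} => (i : A)) (fun i : {a // a ∈ B} => (i : A)))
      ⟨x, h⟩ ⟨x, h⟩
  else 0

/-- `A_j = A \ {x_1, …, x_{j-1}}` for the enumeration `e`. -/
def remaining {A : Type*} [Fintype A] [DecidableEq A] {n : ℕ} (e : Fin n → A) (j : Fin n) :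
    Finset A :=
  Finset.univ.filter (fun a => ∀ i : Fin n, i < j → e i ≠ a)

namespace Stmt0Aux

open Matrix Filter

attribute [local instance] Matrix.linftyOpNormedRing Matrix.linftyOpNormedAlgebra

variable {A : Type*} [Fintype A] [DecidableEq A]

/-- The entrywise absolute value as a real matrix. -/
noncomputable def Rm (Q : Matrix A A ℂ) : Matrix A A ℝ :=
  Matrix.of fun x y => ‖Q x y‖

/-- The entrywise absolute value as a complex matrix (the one from `IntegrableWeight`). -/
noncomputable def Pm (Q : Matrix A A ℂ) : Matrix A A ℂ :=
  Matrix.of fun x y => (‖Q x y‖ : ℂ)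

lemma Pm_eq_map (Q : Matrix A A ℂ) : Pm Q = (Rm Q).map Complex.ofRealHom := by
  ext x y; rfl

lemma Rm_pow_nonneg (Q : Matrix A A ℂ) : ∀ (k : ℕ) (x y : A), 0 ≤ (Rm Q ^ k) x y := by
  intro k
  induction k with
  | zero =>
    intro x y
    rw [pow_zero]
    rcases eq_or_ne x y with h | h
    · simp [Matrix.one_apply, h]
    · simp [Matrix.one_apply, h]
  | succ k ih =>
    intro x y
    rw [pow_succ, Matrix.mul_apply]
    refine Finset.sum_nonneg fun z _ => mul_nonneg (ih x z) ?_
    exact norm_nonneg (Q z y)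

lemma Pm_pow_entry (Q : Matrix A A ℂ) (k : ℕ) (x y : A) :
    (Pm Q ^ k) x y = ((Rm Q ^ k) x y : ℂ) := by
  have : Pm Q ^ k = ((Rm Q) ^ k).map Complex.ofRealHom := by
    rw [Pm_eq_map]
    rw [← RingHom.mapMatrix_apply, ← RingHom.mapMatrix_apply, map_pow]
  rw [this]; rfl

lemma Rm_nonneg (Q : Matrix A A ℂ) (x y : A) : 0 ≤ Rm Q x y := norm_nonneg (Q x y)

/-- entrywise domination of powers of a principal submatrix by powers of `|Q|`. -/
lemma dominate (Q : Matrix A A ℂ) (B : Finset A) :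
    ∀ (k : ℕ) (x y : {a // a ∈ B}),
      ‖((Q.submatrix (fun i : {a // a ∈ B} => (i : A))
        (fun i : {a // a ∈ B} => (i : A))) ^ k) x y‖ ≤ (Rm Q ^ k) (x : A) (y : A) := by
  set M := Q.submatrix (fun i : {a // a ∈ B} => (i : A)) (fun i : {a // a ∈ B} => (i : A)) with hM
  intro k
  induction k with
  | zero =>
    intro x y
    rw [pow_zero, pow_zero]
    rcases eq_or_ne x y with h | h
    · subst h; simp [Matrix.one_apply]
    · have h' : (x : A) ≠ (y : A) := fun hc => h (Subtype.ext hc)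
      simp [Matrix.one_apply, h, h']
  | succ k ih =>
    intro x y
    rw [pow_succ, Matrix.mul_apply]
    have step1 : ‖∑ z : {a // a ∈ B}, (M ^ k) x z * M z y‖ ≤
        ∑ z : {a // a ∈ B}, ‖(M ^ k) x z * M z y‖ :=
      norm_sum_le _ _
    have step2 : ∑ z : {a // a ∈ B}, ‖(M ^ k) x z * M z y‖ ≤
        ∑ z : {a // a ∈ B}, (Rm Q ^ k) (x : A) (z : A) * Rm Q (z : A) (y : A) := by
      refine Finset.sum_le_sum fun z _ => ?_
      rw [norm_mul]
      have hbase : ‖M z y‖ = Rm Q (z : A) (y : A) := by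
        simp [hM, Rm, Matrix.submatrix_apply]
      rw [hbase]
      exact mul_le_mul_of_nonneg_right (ih x z) (Rm_nonneg Q _ _)
    have step3 : ∑ z : {a // a ∈ B}, (Rm Q ^ k) (x : A) (z : A) * Rm Q (z : A) (y : A) ≤
        ∑ z : A, (Rm Q ^ k) (x : A) z * Rm Q z (y : A) := by
      rw [Finset.sum_coe_sort B (fun z => (Rm Q ^ k) (x : A) z * Rm Q z (y : A))]
      refine Finset.sum_le_sum_of_subset_of_nonneg (Finset.subset_univ B) ?_
      intro z _ _
      exact mul_nonneg (Rm_pow_nonneg Q k _ _) (Rm_nonneg Q _ _)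
    have step4 : ∑ z : A, (Rm Q ^ k) (x : A) z * Rm Q z (y : A) = (Rm Q ^ (k+1)) (x : A) (y : A) := by
      rw [pow_succ, Matrix.mul_apply]
    calc ‖∑ z : {a // a ∈ B}, (M ^ k) x z * M z y‖
        ≤ ∑ z : {a // a ∈ B}, ‖(M ^ k) x z * M z y‖ := step1
      _ ≤ ∑ z : {a // a ∈ B}, (Rm Q ^ k) (x : A) (z : A) * Rm Q (z : A) (y : A) := step2
      _ ≤ ∑ z : A, (Rm Q ^ k) (x : A) z * Rm Q z (y : A) := step3
      _ = (Rm Q ^ (k+1)) (x : A) (y : A) := step4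

lemma ev_geom (Q : Matrix A A ℂ) (hQ : IntegrableWeight Q) :
    ∃ c : ℝ, 0 ≤ c ∧ c < 1 ∧
      ∀ᶠ k : ℕ in atTop, ∀ x y : A, (Rm Q ^ k) x y ≤ c ^ k := by
  rcases isEmpty_or_nonempty A with hA | hA
  · exact ⟨0, le_rfl, zero_lt_one, Eventually.of_forall fun k x y => (IsEmpty.false x).elim⟩
  · have hρ : spectralRadius ℂ (Pm Q) < (1 : NNReal) := by
      refine spectrum.spectralRadius_lt_of_forall_lt (Pm Q) fun z hz => ?_
      have := hQ z hz
      rw [← NNReal.coe_lt_coe]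
      simpa using this
    obtain ⟨c, hc1, hc2⟩ := ENNReal.lt_iff_exists_nnreal_btwn.mp hρ
    have hten := spectrum.pow_nnnorm_pow_one_div_tendsto_nhds_spectralRadius (Pm Q)
    have hev : ∀ᶠ k : ℕ in atTop, (‖Pm Q ^ k‖₊ : ENNReal) ^ (1 / (k : ℝ)) < (c : ENNReal) :=
      hten.eventually_lt_const hc1
    refine ⟨(c : ℝ), c.coe_nonneg, ?_, ?_⟩
    · have : c < 1 := by exact_mod_cast hc2
      exact_mod_cast this
    have hev2 : ∀ᶠ k : ℕ in atTop, (1 : ℕ) ≤ k := eventually_ge_atTop 1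
    filter_upwards [hev, hev2] with k hk hk1 x y
    -- first: ‖Pm Q ^ k‖₊ ≤ c ^ k
    have hkne : (k : ℝ) ≠ 0 := Nat.cast_ne_zero.mpr (by omega)
    have hnorm : (‖Pm Q ^ k‖₊ : ENNReal) ≤ (c : ENNReal) ^ (k : ℕ) := by
      have h1 : ((‖Pm Q ^ k‖₊ : ENNReal) ^ (1 / (k : ℝ))) ^ (k : ℝ) ≤ (c : ENNReal) ^ (k : ℝ) :=
        ENNReal.rpow_le_rpow hk.le (Nat.cast_nonneg k)
      have h0 : ((‖Pm Q ^ k‖₊ : ENNReal) ^ (1 / (k : ℝ))) ^ (k : ℝ) = (‖Pm Q ^ k‖₊ : ENNReal) := by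
        rw [← ENNReal.rpow_mul, one_div, inv_mul_cancel₀ hkne, ENNReal.rpow_one]
      rw [h0] at h1
      rwa [ENNReal.rpow_natCast] at h1
    have hnorm' : ‖Pm Q ^ k‖ ≤ (c : ℝ) ^ k := by
      have := (ENNReal.coe_le_coe.mp (by rwa [← ENNReal.coe_pow] at hnorm) : ‖Pm Q ^ k‖₊ ≤ c ^ k)
      exact_mod_cast this
    -- entry bound
    have hentry : ‖(Pm Q ^ k) x y‖₊ ≤ ‖Pm Q ^ k‖₊ := by
      rw [Matrix.linfty_opNNNorm_def]
      calc ‖(Pm Q ^ k) x y‖₊ ≤ ∑ j : A, ‖(Pm Q ^ k) x j‖₊ :=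
            Finset.single_le_sum (f := fun j => ‖(Pm Q ^ k) x j‖₊) (fun j _ => zero_le) (Finset.mem_univ y)
        _ ≤ _ := Finset.le_sup (f := fun i => ∑ j : A, ‖(Pm Q ^ k) i j‖₊) (Finset.mem_univ x)
    have : (Rm Q ^ k) x y ≤ ‖Pm Q ^ k‖ := by
      have h2 : ‖(Pm Q ^ k) x y‖ ≤ ‖Pm Q ^ k‖ := hentry
      rw [Pm_pow_entry] at h2
      have h3 : ‖((Rm Q ^ k) x y : ℂ)‖ = |(Rm Q ^ k) x y| := by
        rw [Complex.norm_real]; rfl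
      rw [h3, abs_of_nonneg (Rm_pow_nonneg Q k x y)] at h2
      exact h2
    exact this.trans hnorm'

/-- abbreviation for the principal submatrix. -/
noncomputable def subm (Q : Matrix A A ℂ) (B : Finset A) : Matrix {a // a ∈ B} {a // a ∈ B} ℂ :=
  Q.submatrix (fun i : {a // a ∈ B} => (i : A)) (fun i : {a // a ∈ B} => (i : A))

lemma summable_entry (Q : Matrix A A ℂ) (hQ : IntegrableWeight Q) (B : Finset A)
    (x y : {a // a ∈ B}) : Summable (fun k : ℕ => (subm Q B ^ k) x y) := by
  obtain ⟨c, hc0, hc1, hev⟩ := ev_geom Q hQ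
  refine Summable.of_norm_bounded_eventually_nat (g := fun k => c ^ k)
    (summable_geometric_of_lt_one hc0 hc1) ?_
  filter_upwards [hev] with k hk
  have h1 := dominate Q B k x y
  have h2 := hk (x : A) (y : A)
  calc ‖(subm Q B ^ k) x y‖ = ‖(subm Q B ^ k) x y‖ := rfl
    _ ≤ (Rm Q ^ k) (x : A) (y : A) := h1
    _ ≤ c ^ k := h2

/-- The matrix of diagonal-aligned green values. -/
noncomputable def Sm (Q : Matrix A A ℂ) (B : Finset A) :
    Matrix {a // a ∈ B} {a // a ∈ B} ℂ :=
  Matrix.of fun x y => ∑' k : ℕ, (subm Q B ^ k) x y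

lemma one_sub_mul_Sm (Q : Matrix A A ℂ) (hQ : IntegrableWeight Q) (B : Finset A) :
    (1 - subm Q B) * Sm Q B = 1 := by
  set M := subm Q B with hMdef
  have hsum : ∀ x y, Summable fun k : ℕ => (M ^ k) x y := fun x y => summable_entry Q hQ B x y
  ext x y
  rw [Matrix.mul_apply]
  have e1 : ∀ z : {a // a ∈ B}, (1 - M) x z * Sm Q B z y
      = ∑' k : ℕ, (1 - M) x z * (M ^ k) z y := fun z => ((hsum z y).tsum_mul_left _).symm
  rw [Finset.sum_congr rfl fun z _ => e1 z]
  rw [← Summable.tsum_finsetSum (fun z _ => (hsum z y).mul_left _)]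
  have e2 : ∀ k : ℕ, (∑ z : {a // a ∈ B}, (1 - M) x z * (M ^ k) z y)
      = (M ^ k) x y - (M ^ (k+1)) x y := by
    intro k
    have : (∑ z : {a // a ∈ B}, (1 - M) x z * (M ^ k) z y) = ((1 - M) * M ^ k) x y := by
      rw [Matrix.mul_apply]
    rw [this, sub_mul, one_mul, ← pow_succ']
    rfl
  rw [tsum_congr e2]
  have hsucc : Summable fun k : ℕ => (M ^ (k+1)) x y :=
    (hsum x y).comp_injective fun a b => by omega
  rw [Summable.tsum_sub (hsum x y) hsucc, Summable.tsum_eq_zero_add (hsum x y)]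
  simp [Matrix.one_apply]

lemma Sm_mul_one_sub (Q : Matrix A A ℂ) (hQ : IntegrableWeight Q) (B : Finset A) :
    Sm Q B * (1 - subm Q B) = 1 := by
  set M := subm Q B with hMdef
  have hsum : ∀ x y, Summable fun k : ℕ => (M ^ k) x y := fun x y => summable_entry Q hQ B x y
  ext x y
  rw [Matrix.mul_apply]
  have e1 : ∀ z : {a // a ∈ B}, Sm Q B x z * (1 - M) z y
      = ∑' k : ℕ, (M ^ k) x z * (1 - M) z y := fun z => ((hsum x z).tsum_mul_right _).symm
  rw [Finset.sum_congr rfl fun z _ => e1 z]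
  rw [← Summable.tsum_finsetSum (fun z _ => (hsum x z).mul_right _)]
  have e2 : ∀ k : ℕ, (∑ z : {a // a ∈ B}, (M ^ k) x z * (1 - M) z y)
      = (M ^ k) x y - (M ^ (k+1)) x y := by
    intro k
    have : (∑ z : {a // a ∈ B}, (M ^ k) x z * (1 - M) z y) = (M ^ k * (1 - M)) x y := by
      rw [Matrix.mul_apply]
    rw [this, mul_sub, mul_one, ← pow_succ]
    rfl
  rw [tsum_congr e2]
  have hsucc : Summable fun k : ℕ => (M ^ (k+1)) x y :=
    (hsum x y).comp_injective fun a b => by omega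
  rw [Summable.tsum_sub (hsum x y) hsucc, Summable.tsum_eq_zero_add (hsum x y)]
  simp [Matrix.one_apply]

/-- `D B = det (1 - Q_B)`. -/
noncomputable def Dd (Q : Matrix A A ℂ) (B : Finset A) : ℂ := (1 - subm Q B).det

lemma Dd_ne_zero (Q : Matrix A A ℂ) (hQ : IntegrableWeight Q) (B : Finset A) :
    Dd Q B ≠ 0 :=
  (Matrix.isUnit_det_of_right_inverse (one_sub_mul_Sm Q hQ B)).ne_zero

lemma adjugate_diag {β : Type*} [Fintype β] [DecidableEq β] (N : Matrix β β ℂ) (x : β) :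
    N.adjugate x x =
      (N.submatrix (fun y : {y : β // y ≠ x} => (y : β)) (fun y : {y : β // y ≠ x} => (y : β))).det := by
  classical
  haveI : Unique {y : β // ¬ y ≠ x} := ⟨⟨⟨x, by simp⟩⟩, fun y => Subtype.ext (not_ne_iff.mp y.2)⟩
  set e : {y : β // y ≠ x} ⊕ {y : β // ¬ y ≠ x} ≃ β := Equiv.sumCompl _ with he
  rw [Matrix.adjugate_apply, ← Matrix.det_submatrix_equiv_self e]
  have hb : (N.updateRow x (Pi.single x 1)).submatrix e e =
      Matrix.fromBlocks
        (N.submatrix (fun y : {y : β // y ≠ x} => (y : β)) (fun y : {y : β // y ≠ x} => (y : β)))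
        (Matrix.of fun (g : {y : β // y ≠ x}) (_ : {y : β // ¬ y ≠ x}) => N (g : β) x) 0 1 := by
    ext i j
    have hval : ∀ u : {y : β // ¬ y ≠ x}, (u : β) = x := fun u => not_ne_iff.mp u.2
    cases i with
    | inl g =>
      cases j with
      | inl g' =>
        simp [he, Matrix.updateRow_apply, g.2, Matrix.fromBlocks]
      | inr u =>
        simp [he, Matrix.updateRow_apply, g.2, Matrix.fromBlocks, hval u]
    | inr u =>
      cases j with
      | inl g' =>
        simp [he, Matrix.updateRow_apply, hval u, Matrix.fromBlocks, Pi.single_apply, g'.2]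
      | inr u' =>
        simp [he, Matrix.updateRow_apply, hval u, hval u', Matrix.fromBlocks, Pi.single_apply,
          Matrix.one_apply, Subsingleton.elim u u']
  rw [hb, Matrix.det_fromBlocks_zero₂₁, Matrix.det_one, mul_one]

lemma minor_eq (Q : Matrix A A ℂ) (B : Finset A) (x : A) (hx : x ∈ B) :
    ((1 - subm Q B).submatrix
      (fun y : {y : {a // a ∈ B} // y ≠ ⟨x, hx⟩} => (y : {a // a ∈ B}))
      (fun y : {y : {a // a ∈ B} // y ≠ ⟨x, hx⟩} => (y : {a // a ∈ B}))).det
      = Dd Q (B.erase x) := by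
  classical
  set ε : {a // a ∈ B.erase x} ≃ {y : {a // a ∈ B} // y ≠ ⟨x, hx⟩} :=
    { toFun := fun a => ⟨⟨a.1, (Finset.mem_erase.mp a.2).2⟩,
        fun h => (Finset.mem_erase.mp a.2).1 (congrArg Subtype.val h)⟩
      invFun := fun y => ⟨((y : {a // a ∈ B}) : A),
        Finset.mem_erase.mpr ⟨fun hh => y.2 (Subtype.ext hh), ((y : {a // a ∈ B})).2⟩⟩
      left_inv := fun a => Subtype.ext rfl
      right_inv := fun y => Subtype.ext (Subtype.ext rfl) } with hε
  rw [Dd, ← Matrix.det_submatrix_equiv_self ε ((1 - subm Q B).submatrix _ _)]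
  congr 1
  ext i j
  rcases eq_or_ne i j with h | h
  · subst h
    simp only [Matrix.submatrix_apply, Matrix.sub_apply, subm, Matrix.of_apply,
      Matrix.one_apply_eq]
    rw [hε]
    rfl
  · have h2 : (ε i : {a // a ∈ B}) ≠ (ε j : {a // a ∈ B}) := by
      intro hc
      exact h (ε.injective (Subtype.ext hc))
    simp only [Matrix.submatrix_apply, Matrix.sub_apply, subm, Matrix.of_apply]
    rw [Matrix.one_apply_ne h2, Matrix.one_apply_ne h]
    rw [hε]
    rfl

lemma greenIn_eq (Q : Matrix A A ℂ) (hQ : IntegrableWeight Q) (B : Finset A) (x : A)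
    (hx : x ∈ B) : greenIn Q B x = Dd Q (B.erase x) / Dd Q B := by
  classical
  have h1 : greenIn Q B x = Sm Q B ⟨x, hx⟩ ⟨x, hx⟩ := by
    rw [greenIn, dif_pos hx]; rfl
  have h2 : (1 - subm Q B)⁻¹ = Sm Q B := Matrix.inv_eq_right_inv (one_sub_mul_Sm Q hQ B)
  rw [h1, ← h2, Matrix.inv_def, Matrix.smul_apply, Matrix.adjugate_apply,
    ← Matrix.adjugate_apply, adjugate_diag, minor_eq Q B x hx]
  rw [Ring.inverse_eq_inv]
  rw [div_eq_mul_inv, mul_comm]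
  rfl

lemma telescope (g : ℕ → ℂ) (hg : ∀ m, g m ≠ 0) (n : ℕ) :
    ∏ m ∈ Finset.range n, (g (m + 1) / g m) = g n / g 0 := by
  induction n with
  | zero => simp [div_self (hg 0)]
  | succ n ih =>
    rw [Finset.prod_range_succ, ih, mul_comm, div_mul_div_comm, mul_comm (g (n + 1)) (g n),
      mul_div_mul_left _ _ (hg n)]

/-- The remaining set as a function of a natural number cutoff. -/
def Tset {n : ℕ} (e : Fin n → A) (m : ℕ) : Finset A :=
  Finset.univ.filter (fun a => ∀ i : Fin n, (i : ℕ) < m → e i ≠ a)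

lemma remaining_eq_Tset {n : ℕ} (e : Fin n → A) (j : Fin n) :
    remaining e j = Tset e (j : ℕ) := by
  ext a
  constructor
  · intro h
    exact Finset.mem_filter.mpr ⟨Finset.mem_univ a,
      fun i hi => (Finset.mem_filter.mp h).2 i hi⟩
  · intro h
    exact Finset.mem_filter.mpr ⟨Finset.mem_univ a,
      fun i hi => (Finset.mem_filter.mp h).2 i hi⟩

lemma mem_Tset_self {n : ℕ} (e : Fin n → A) (he : Function.Injective e) (j : Fin n) :
    e j ∈ Tset e (j : ℕ) := by
  simp only [Tset, Finset.mem_filter, Finset.mem_univ, true_and]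
  intro i hi hc
  exact absurd (he hc) (by intro h; subst h; omega)

lemma Tset_erase {n : ℕ} (e : Fin n → A) (he : Function.Injective e) (j : Fin n) :
    (Tset e (j : ℕ)).erase (e j) = Tset e ((j : ℕ) + 1) := by
  ext a
  simp only [Finset.mem_erase, Tset, Finset.mem_filter, Finset.mem_univ, true_and]
  constructor
  · rintro ⟨h1, h2⟩ i hi
    rcases Nat.lt_or_ge (i : ℕ) (j : ℕ) with h | h
    · exact h2 i h
    · have : i = j := Fin.ext (by omega)
      subst this
      exact fun hc => h1 hc.symm
  · intro h
    refine ⟨fun hc => (h j (by omega)) hc.symm, fun i hi => h i (by omega)⟩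

lemma prod_formula (Q : Matrix A A ℂ) (hQ : IntegrableWeight Q) {n : ℕ} (e : Fin n → A)
    (he : Function.Injective e) :
    ∏ j : Fin n, greenIn Q (remaining e j) (e j) = Dd Q (Tset e n) / Dd Q (Tset e 0) := by
  have hterm : ∀ j : Fin n, greenIn Q (remaining e j) (e j)
      = Dd Q (Tset e ((j : ℕ) + 1)) / Dd Q (Tset e (j : ℕ)) := by
    intro j
    rw [remaining_eq_Tset, greenIn_eq Q hQ _ _ (mem_Tset_self e he j), Tset_erase e he j]
  rw [Finset.prod_congr rfl fun j _ => hterm j]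
  rw [Fin.prod_univ_eq_prod_range (fun m => Dd Q (Tset e (m + 1)) / Dd Q (Tset e m)) n]
  exact telescope _ (fun m => Dd_ne_zero Q hQ _) n

lemma Tset_zero {n : ℕ} (e : Fin n → A) : Tset e 0 = Finset.univ := by
  refine Finset.eq_univ_of_forall fun a => ?_
  exact Finset.mem_filter.mpr ⟨Finset.mem_univ a, fun i hi => absurd hi (by omega)⟩

lemma Tset_top {n : ℕ} (e : Fin n → A) (hs : Function.Surjective e) : Tset e n = ∅ := by
  ext a
  simp only [Tset, Finset.mem_filter, Finset.mem_univ, true_and, Finset.notMem_empty, iff_false]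
  intro h
  obtain ⟨i, hi⟩ := hs a
  exact h i i.isLt hi

end Stmt0Aux

open Stmt0Aux in
/-- The product `Π_j G_{A_j}(x_j,x_j)` is independent of the enumeration of `A`. -/
theorem stmt0 {A : Type*} [Fintype A] [DecidableEq A] (Q : Matrix A A ℂ)
    (hQ : IntegrableWeight Q) (n : ℕ) (e : Fin n ≃ A) (σ : Equiv.Perm (Fin n)) :
    ∏ j : Fin n, greenIn Q (remaining (⇑(σ.trans e)) j) (e (σ j)) =
      ∏ j : Fin n, greenIn Q (remaining (⇑e) j) (e j) := by
  classical
  have h1 : ∏ j : Fin n, greenIn Q (remaining (⇑(σ.trans e)) j) (e (σ j))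
      = ∏ j : Fin n, greenIn Q (remaining (⇑(σ.trans e)) j) ((σ.trans e) j) := rfl
  rw [h1, prod_formula Q hQ _ (σ.trans e).injective, prod_formula Q hQ _ e.injective,
    Tset_zero, Tset_zero, Tset_top _ (σ.trans e).surjective, Tset_top _ e.surjective]
end

section
/- Let Q be an n×n complex matrix all of whose eigenvalues have modulus strictly less than 1, indexed by A = {x_1,…,x_n}, and suppose each principal submatrix Q_{A_j} (with A_j = A \ {x_1,…,x_{j-1}}) also has all eigenvalues of modulus < 1. Then Π_{j=1}^n G_{A_j}(x_j,x_j) = det((I − Q)^{-1}) = 1/det(I − Q), where G_B = (I − Q_B)^{-1}. -/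
open scoped BigOperators

section AnalysisAux
variable {B : Type*} [Fintype B] [DecidableEq B]

attribute [local instance] Matrix.linftyOpNormedRing Matrix.linftyOpNormedAlgebra

lemma radius_lt (M : Matrix B B ℂ) (h : SpecLtOne M) : spectralRadius ℂ M < 1 := by
  rcases isEmpty_or_nonempty B with hB | hB
  · have : Subsingleton (Matrix B B ℂ) := by infer_instance
    rw [spectrum.SpectralRadius.of_subsingleton]; exact zero_lt_one
  · have : Nontrivial (Matrix B B ℂ) := by
      classical
      obtain ⟨b⟩ := hB
      exact ⟨1, 0, fun hc => by simpa using congrFun (congrFun hc b) b⟩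
    have hne := spectrum.nonempty M
    have := spectrum.spectralRadius_lt_of_forall_lt_of_nonempty (𝕜 := ℂ) hne
      (r := 1) (fun k hk => by
        have h2 := h k hk
        rw [← NNReal.coe_lt_coe]
        simpa using h2)
    simpa using this

lemma geom_bound (M : Matrix B B ℂ) (h : SpecLtOne M) :
    ∃ c : ℝ, 0 ≤ c ∧ c < 1 ∧ ∀ᶠ n : ℕ in Filter.atTop, ‖M ^ n‖ ≤ c ^ n := by
  have hr := radius_lt M h
  obtain ⟨c', hc1, hc2⟩ := exists_between hr
  have hc'top : c' ≠ ⊤ := (hc2.trans_le le_top).ne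
  set c : NNReal := c'.toNNReal with hc
  have hcc : (c : ENNReal) = c' := ENNReal.coe_toNNReal hc'top
  have hlt1 : (c : ℝ) < 1 := by
    have : (c : ENNReal) < 1 := hcc ▸ hc2
    exact_mod_cast this
  refine ⟨c, c.2, hlt1, ?_⟩
  have htend := spectrum.pow_nnnorm_pow_one_div_tendsto_nhds_spectralRadius M
  have hev : ∀ᶠ n : ℕ in Filter.atTop,
      (‖M ^ n‖₊ : ENNReal) ^ (1 / (n:ℝ)) < (c : ENNReal) :=
    htend.eventually_lt_const (hcc ▸ hc1)
  filter_upwards [hev, Filter.eventually_gt_atTop 0] with n hn hn0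
  have hnR : (0:ℝ) < (n:ℝ) := by exact_mod_cast hn0
  have h2 : ((‖M ^ n‖₊ : ENNReal) ^ (1 / (n:ℝ))) ^ (n:ℝ) < (c : ENNReal) ^ (n:ℝ) :=
    ENNReal.rpow_lt_rpow hn hnR
  rw [← ENNReal.rpow_mul, one_div, inv_mul_cancel₀ hnR.ne', ENNReal.rpow_one] at h2
  have h3 : ‖M ^ n‖₊ < c ^ n := by
    rw [ENNReal.rpow_natCast] at h2 ; exact_mod_cast h2
  exact_mod_cast h3.le

lemma hasSum_geom (M : Matrix B B ℂ) (h : SpecLtOne M) :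
    HasSum (fun n : ℕ => M ^ n) (1 - M)⁻¹ ∧ IsUnit (1 - M).det := by
  obtain ⟨c, hc0, hc1, hev⟩ := geom_bound M h
  have hsum : Summable (fun n : ℕ => M ^ n) :=
    Summable.of_norm_bounded_eventually_nat (summable_geometric_of_lt_one hc0 hc1) hev
  have h0 : Filter.Tendsto (fun n : ℕ => M ^ n) Filter.atTop (nhds 0) :=
    squeeze_zero_norm' hev (tendsto_pow_atTop_nhds_zero_of_lt_one hc0 hc1)
  have hs := hsum.hasSum
  set S := ∑' n : ℕ, M ^ n with hS
  have h2 : HasSum (fun n : ℕ => M ^ n - M ^ (n + 1)) ((1 - M) * S) := by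
    have := hs.mul_left (1 - M)
    have e : (fun n : ℕ => M ^ n - M ^ (n + 1)) = fun i => (1 - M) * M ^ i := by
      funext n; rw [sub_mul, one_mul, pow_succ']
    rw [e]; exact this
  have t1 := h2.tendsto_sum_nat
  have hps : ∀ N, ∑ i ∈ Finset.range N, (M ^ i - M ^ (i + 1)) = 1 - M ^ N := by
    intro N
    rw [Finset.sum_range_sub' (fun i => M ^ i)]
    simp
  have t2 : Filter.Tendsto (fun N => ∑ i ∈ Finset.range N, (M ^ i - M ^ (i + 1)))
      Filter.atTop (nhds 1) := by
    simp_rw [hps]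
    simpa using tendsto_const_nhds.sub h0
  have hmul : (1 - M) * S = 1 := tendsto_nhds_unique t1 t2
  have hunit : IsUnit (1 - M) :=
    ⟨⟨1 - M, S, hmul, mul_eq_one_comm.mp hmul⟩, rfl⟩
  have hinv : (1 - M)⁻¹ = S := Matrix.inv_eq_right_inv hmul
  exact ⟨hinv ▸ hs, (Matrix.isUnit_iff_isUnit_det _).mp hunit⟩

lemma green_eq (M : Matrix B B ℂ) (h : SpecLtOne M) (x y : B) :
    green M x y = (1 - M)⁻¹ x y := by
  have hs := (hasSum_geom M h).1
  let f : Matrix B B ℂ →ₗ[ℂ] ℂ :=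
    { toFun := fun N => N x y, map_add' := fun a b => rfl, map_smul' := fun c a => rfl }
  have hf : Continuous f := f.continuous_of_finiteDimensional
  have h2 := hs.map f hf
  exact h2.tsum_eq

lemma det_ne_zero (M : Matrix B B ℂ) (h : SpecLtOne M) : (1 - M).det ≠ 0 :=
  (hasSum_geom M h).2.ne_zero

lemma adjugate_diag (N : Matrix B B ℂ) (x : B) :
    N.adjugate x x
      = Matrix.det (N.submatrix (fun i : {a : B // a ≠ x} => (i : B))
          (fun i : {a : B // a ≠ x} => (i : B))) := by
  classical
  set m := Fintype.card {a : B // a ≠ x} with hm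
  have hcard : Fintype.card B = m + 1 := by
    rw [hm, Fintype.card_subtype_compl]
    have hx : Fintype.card {a : B // a = x} = 1 := Fintype.card_subtype_eq x
    have hpos : 0 < Fintype.card B := Fintype.card_pos_iff.mpr ⟨x⟩
    omega
  obtain hB := Fintype.equivFinOfCardEq hcard
  set g : Fin (m + 1) ≃ B := (Equiv.swap 0 (hB x)).trans hB.symm with hgdef
  have hg0 : g 0 = x := by simp [hgdef]
  have hadj : N.adjugate x x = (N.submatrix g g).adjugate 0 0 := by
    rw [Matrix.adjugate_submatrix_equiv_self, Matrix.submatrix_apply, hg0]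
  rw [hadj, Matrix.adjugate_fin_succ_eq_det_submatrix]
  simp only [Fin.val_zero, pow_zero, one_mul, Fin.succAbove_zero,
    Matrix.submatrix_submatrix]
  have hinj : Function.Injective (fun i : Fin m => (⟨g i.succ, by
      intro hc
      have := g.injective (hc.trans hg0.symm)
      exact (Fin.succ_ne_zero i) this⟩ : {a : B // a ≠ x})) := by
    intro i j hij
    have : g i.succ = g j.succ := congrArg Subtype.val hij
    exact Fin.succ_injective _ (g.injective this)
  set σ : Fin m ≃ {a : B // a ≠ x} :=
    Equiv.ofBijective _ ((Fintype.bijective_iff_injective_and_card _).mpr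
      ⟨hinj, by simp [hm]⟩) with hσ
  rw [← Matrix.det_submatrix_equiv_self σ, Matrix.submatrix_submatrix]
  norm_num
  rfl

end AnalysisAux

def msub {A : Type*} [Fintype A] [DecidableEq A] (Q : Matrix A A ℂ) (S : Finset A) :
    Matrix {a // a ∈ S} {a // a ∈ S} ℂ :=
  Q.submatrix (fun i : {a // a ∈ S} => (i : A)) (fun i : {a // a ∈ S} => (i : A))

lemma step_lemma {A : Type*} [Fintype A] [DecidableEq A] (Q : Matrix A A ℂ) (S : Finset A)
    (x : A) (hx : x ∈ S) (hs : SpecLtOne (msub Q S)) :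
    greenIn Q S x * (1 - msub Q S).det = (1 - msub Q (S.erase x)).det := by
  classical
  have hgi : greenIn Q S x = green (msub Q S) ⟨x, hx⟩ ⟨x, hx⟩ := by
    rw [greenIn, dif_pos hx]; rfl
  set M := msub Q S with hM
  have hdet := det_ne_zero M hs
  rw [hgi, green_eq M hs]
  have hinvapp : (1 - M)⁻¹ ⟨x, hx⟩ ⟨x, hx⟩
      = ((1 - M).det)⁻¹ * (1 - M).adjugate ⟨x, hx⟩ ⟨x, hx⟩ := by
    rw [Matrix.inv_def, Matrix.smul_apply, Ring.inverse_eq_inv, smul_eq_mul]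
  rw [hinvapp]
  have hcanc : ((1 - M).det)⁻¹ * (1 - M).adjugate ⟨x, hx⟩ ⟨x, hx⟩ * (1 - M).det
      = (1 - M).adjugate ⟨x, hx⟩ ⟨x, hx⟩ := by field_simp
  rw [hcanc, adjugate_diag]
  set τ : {b : {a // a ∈ S} // b ≠ ⟨x, hx⟩} ≃ {a // a ∈ S.erase x} :=
    { toFun := fun b => ⟨b.1.1, Finset.mem_erase.mpr
        ⟨fun hc => b.2 (Subtype.ext hc), b.1.2⟩⟩
      invFun := fun a => ⟨⟨a.1, Finset.mem_of_mem_erase a.2⟩,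
        fun hc => (Finset.ne_of_mem_erase a.2) (congrArg Subtype.val hc)⟩
      left_inv := fun b => Subtype.ext (Subtype.ext rfl)
      right_inv := fun a => Subtype.ext rfl } with hτ
  rw [← Matrix.det_submatrix_equiv_self τ (1 - msub Q (S.erase x))]
  congr 1
  ext i k
  simp [Matrix.sub_apply, Matrix.submatrix_apply, Matrix.one_apply, msub, hτ]
  rfl

section Assemble
variable {A : Type*} [Fintype A] [DecidableEq A] {n : ℕ}

def Sj (e : Fin n → A) (j : ℕ) : Finset A :=
  Finset.univ.filter (fun a => ∀ i : Fin n, (i : ℕ) < j → e i ≠ a)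

lemma Sj_coe (e : Fin n → A) (j : Fin n) : Sj e (j : ℕ) = remaining e j := by
  ext a
  simp only [Sj, remaining, Finset.mem_filter, Finset.mem_univ, true_and, Fin.lt_def]

lemma Sj_zero (e : Fin n → A) : Sj e 0 = Finset.univ := by
  ext a; simp [Sj]

lemma Sj_top (e : Fin n ≃ A) : Sj (⇑e) n = ∅ := by
  ext a
  simp only [Sj, Finset.mem_filter, Finset.mem_univ, true_and, Finset.notMem_empty, iff_false,
    not_forall]
  exact ⟨e.symm a, (e.symm a).isLt, by simp⟩

lemma mem_Sj (e : Fin n ≃ A) (j : Fin n) : e j ∈ Sj (⇑e) (j : ℕ) := by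
  simp only [Sj, Finset.mem_filter, Finset.mem_univ, true_and]
  intro i hi hc
  have := e.injective hc
  subst this
  exact lt_irrefl _ hi

lemma Sj_succ (e : Fin n ≃ A) (j : Fin n) :
    Sj (⇑e) ((j : ℕ) + 1) = (Sj (⇑e) (j : ℕ)).erase (e j) := by
  ext a
  simp only [Sj, Finset.mem_filter, Finset.mem_univ, true_and, Finset.mem_erase]
  constructor
  · intro H
    exact ⟨(H j (by omega)).symm, fun i hi => H i (by omega)⟩
  · rintro ⟨h1, h2⟩ i hi
    rcases lt_or_eq_of_le (Nat.lt_succ_iff.mp hi) with hlt | heq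
    · exact h2 i hlt
    · have : i = j := Fin.ext heq
      subst this
      exact fun hc => h1 hc.symm

end Assemble

/-- `Π_j G_{A_j}(x_j,x_j) = det((I-Q)⁻¹) = 1/det(I-Q)` whenever all eigenvalues of `Q`
and of each principal submatrix `Q_{A_j}` have modulus `< 1`. -/
theorem stmt1 {A : Type*} [Fintype A] [DecidableEq A] (Q : Matrix A A ℂ)
    (n : ℕ) (e : Fin n ≃ A)
    (h0 : SpecLtOne Q)
    (h : ∀ j : Fin n,
      SpecLtOne (Q.submatrix (fun i : {a // a ∈ remaining (⇑e) j} => (i : A))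
        (fun i : {a // a ∈ remaining (⇑e) j} => (i : A)))) :
    (∏ j : Fin n, greenIn Q (remaining (⇑e) j) (e j)) = Matrix.det (1 - Q)⁻¹ ∧
      (∏ j : Fin n, greenIn Q (remaining (⇑e) j) (e j)) = 1 / Matrix.det (1 - Q) := by
  classical
  set d : ℕ → ℂ := fun j => (1 - msub Q (Sj (⇑e) j)).det with hd
  have hspec : ∀ j : Fin n, SpecLtOne (msub Q (Sj (⇑e) (j : ℕ))) := by
    intro j
    rw [Sj_coe (⇑e) j]
    exact h j
  have hdn : d n = 1 := by
    haveI : IsEmpty {a : A // a ∈ Sj (⇑e) n} := by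
      rw [Sj_top e]
      exact ⟨fun a => absurd a.2 (Finset.notMem_empty _)⟩
    exact Matrix.det_isEmpty
  have hd0 : ∀ j ≤ n, d j ≠ 0 := by
    intro j hj
    rcases eq_or_lt_of_le hj with rfl | hlt
    · rw [hdn]; exact one_ne_zero
    · exact det_ne_zero _ (hspec ⟨j, hlt⟩)
  have hstep : ∀ j : Fin n, greenIn Q (remaining (⇑e) j) (e j) = d ((j : ℕ) + 1) / d (j : ℕ) := by
    intro j
    have hs := step_lemma Q (Sj (⇑e) (j : ℕ)) (e j) (mem_Sj e j) (hspec j)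
    rw [← Sj_succ e j] at hs
    rw [← Sj_coe (⇑e) j]
    rw [eq_div_iff (hd0 j (le_of_lt j.isLt))]
    exact hs
  have hprod : ∀ N, N ≤ n → ∏ i ∈ Finset.range N, (d (i + 1) / d i) = d N / d 0 := by
    intro N
    induction N with
    | zero => intro _; simp [div_self (hd0 0 (Nat.zero_le n))]
    | succ N ih =>
      intro hN
      have h1 := hd0 N (by omega)
      have h2 := hd0 0 (by omega)
      rw [Finset.prod_range_succ, ih (by omega)]
      field_simp
  have hfin : (∏ j : Fin n, greenIn Q (remaining (⇑e) j) (e j)) = d n / d 0 := by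
    rw [Finset.prod_congr rfl fun j _ => hstep j]
    rw [Fin.prod_univ_eq_prod_range (fun i => d (i + 1) / d i) n]
    exact hprod n le_rfl
  have hd0Q : d 0 = (1 - Q).det := by
    show (1 - msub Q (Sj (⇑e) 0)).det = (1 - Q).det
    rw [show Sj (⇑e) 0 = (Finset.univ : Finset A) from Sj_zero (⇑e)]
    set u : {a // a ∈ (Finset.univ : Finset A)} ≃ A :=
      Equiv.subtypeUnivEquiv (fun a => Finset.mem_univ a) with hu
    rw [← Matrix.det_submatrix_equiv_self u (1 - Q)]
    have heq : (1 - msub Q (Finset.univ : Finset A)) = (1 - Q).submatrix u u := by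
      ext i k
      simp [msub, Matrix.one_apply, Matrix.sub_apply, Matrix.submatrix_apply, hu]
    rw [heq]
  have key : (∏ j : Fin n, greenIn Q (remaining (⇑e) j) (e j)) = 1 / (1 - Q).det := by
    rw [hfin, hdn, hd0Q]
  refine ⟨?_, key⟩
  rw [key, Matrix.det_nonsing_inv, Ring.inverse_eq_inv, one_div]
end

section
/- (Matrix-tree theorem via loop-erased walks) Let G = (V,E) be a finite connected simple graph with vertices {x_0,…,x_n}, let Δ be the combinatorial graph Laplacian restricted to rows and columns indexed by {x_1,…,x_n} (degree matrix minus adjacency matrix). Then the number of spanning trees of G equals det Δ. -/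
open scoped BigOperators
open Matrix Finset Function

set_option linter.unusedSectionVars false
set_option maxHeartbeats 1000000

namespace MTTaux

variable {V : Type*} [Fintype V] [DecidableEq V]

section D
variable [LinearOrder V]

/-- Signed incidence of a vertex in an (oriented) edge. -/
noncomputable def dd (v : V) (e : Sym2 V) : ℝ :=
  (if v = e.inf then 1 else 0) - (if v = e.sup then 1 else 0)

lemma dd_mk_of_le {a b : V} (hab : a ≤ b) (v : V) :
    dd v s(a, b) = (if v = a then 1 else 0) - (if v = b then 1 else 0) := by
  simp [dd, min_eq_left hab, max_eq_right hab]

lemma dd_eq_zero_of_not_mem {v : V} {e : Sym2 V} (h : v ∉ e) : dd v e = 0 := by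
  induction e using Sym2.ind with
  | _ a b =>
    simp only [Sym2.mem_iff, not_or] at h
    rcases le_total a b with hab | hab
    · simp [dd_mk_of_le hab, h.1, h.2]
    · rw [Sym2.eq_swap]; simp [dd_mk_of_le hab, h.1, h.2]

lemma dd_add_eq_zero {a b : V} (h : a ≠ b) : dd a s(a, b) + dd b s(a, b) = 0 := by
  rcases le_total a b with hab | hab
  · simp [dd_mk_of_le hab, h, h.symm]
  · rw [Sym2.eq_swap]; simp [dd_mk_of_le hab, h, h.symm]

lemma dd_sq {a b : V} (h : a ≠ b) : dd a s(a, b) ^ 2 = 1 := by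
  rcases le_total a b with hab | hab
  · simp [dd_mk_of_le hab, h, h.symm]
  · rw [Sym2.eq_swap]; simp [dd_mk_of_le hab, h, h.symm]

lemma dd_mul {a b : V} (h : a ≠ b) : dd a s(a, b) * dd b s(a, b) = -1 := by
  rcases le_total a b with hab | hab
  · simp [dd_mk_of_le hab, h, h.symm]
  · rw [Sym2.eq_swap]; simp [dd_mk_of_le hab, h, h.symm]

end D

end MTTaux

namespace MTTaux2
open MTTaux SimpleGraph

variable {V : Type*} [Fintype V] [DecidableEq V] [LinearOrder V]

lemma sum_dd_mul_dd (G : SimpleGraph V) [DecidableRel G.Adj] (u v : V) :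
    ∑ e ∈ G.edgeFinset, dd u e * dd v e = G.lapMatrix ℝ u v := by
  rcases eq_or_ne u v with rfl | huv
  · have h1 : ∀ e ∈ G.edgeFinset, dd u e * dd u e = if u ∈ e then 1 else 0 := by
      intro e he
      rw [mem_edgeFinset] at he
      induction e using Sym2.ind with
      | _ a b =>
        have hab : a ≠ b := (G.ne_of_adj (by rwa [mem_edgeSet] at he))
        by_cases hu : u ∈ s(a, b)
        · rw [Sym2.mem_iff] at hu
          rcases hu with rfl | rfl
          · have := dd_sq (V := V) hab; rw [sq] at this
            simp [this, hab]
          · rw [Sym2.eq_swap]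
            have := dd_sq (V := V) hab.symm; rw [sq] at this
            simp [this, hab.symm, Sym2.eq_swap]
        · simp [dd_eq_zero_of_not_mem hu, hu]
    rw [Finset.sum_congr rfl h1, Finset.sum_boole]
    rw [← incidenceFinset_eq_filter, card_incidenceFinset_eq_degree]
    simp [lapMatrix, degMatrix, adjMatrix]
  · have h1 : ∀ e ∈ G.edgeFinset, dd u e * dd v e = if e = s(u, v) then -1 else 0 := by
      intro e he
      rw [mem_edgeFinset] at he
      by_cases hh : e = s(u, v)
      · subst hh; simp [dd_mul huv]
      · rw [if_neg hh]
        by_cases hu : u ∈ e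
        · by_cases hv : v ∈ e
          · exfalso
            induction e using Sym2.ind with
            | _ a b =>
              rw [Sym2.mem_iff] at hu hv
              apply hh
              rcases hu with rfl | rfl <;> rcases hv with rfl | rfl
              · exact absurd rfl huv
              · rfl
              · exact Sym2.eq_swap
              · exact absurd rfl huv
          · rw [dd_eq_zero_of_not_mem hv, mul_zero]
        · rw [dd_eq_zero_of_not_mem hu, zero_mul]
    rw [Finset.sum_congr rfl h1, Finset.sum_ite_eq' G.edgeFinset (s(u, v)) (fun _ => (-1 : ℝ))]
    simp only [lapMatrix, degMatrix, adjMatrix, huv, mem_edgeFinset, mem_edgeSet,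
      Matrix.sub_apply, Matrix.diagonal_apply_ne _ huv, Matrix.of_apply, zero_sub]
    split <;> simp

end MTTaux2

section CB
variable {m E : Type*} [Fintype m] [DecidableEq m] [Fintype E] [DecidableEq E]

lemma det_mul_transpose_expand (A : Matrix m E ℝ) :
    Matrix.det (A * Aᵀ) = ∑ g : m → E, (∏ i, A i (g i)) * Matrix.det (A.submatrix id g) := by
  rw [Matrix.det_apply]
  have h1 : ∀ σ : Equiv.Perm m, (∏ i, (A * Aᵀ) (σ i) i)
      = ∑ g : m → E, ∏ i, (A (σ i) (g i) * A i (g i)) := by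
    intro σ
    simp_rw [Matrix.mul_apply, Matrix.transpose_apply]
    rw [Finset.prod_univ_sum]
    rw [← Fintype.piFinset_univ]
  simp_rw [h1, Finset.smul_sum]
  rw [Finset.sum_comm]
  refine Finset.sum_congr rfl fun g _ => ?_
  have h2 : ∀ σ : Equiv.Perm m, (Equiv.Perm.sign σ) • ∏ i, (A (σ i) (g i) * A i (g i))
      = ((Equiv.Perm.sign σ) • ∏ i, A (σ i) (g i)) * ∏ i, A i (g i) := by
    intro σ; rw [Finset.prod_mul_distrib, smul_mul_assoc]
  simp_rw [h2, ← Finset.sum_mul]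
  rw [mul_comm, Matrix.det_apply]
  rfl

lemma cauchyBinet_self (A : Matrix m E ℝ) (f : Finset E → ℝ)
    (hf : ∀ s ∈ Finset.univ.powersetCard (Fintype.card m), ∀ e₀ : m ≃ {x // x ∈ s},
      f s = (Matrix.det (A.submatrix id (fun i => (e₀ i).1))) ^ 2) :
    Matrix.det (A * Aᵀ) = ∑ s ∈ Finset.univ.powersetCard (Fintype.card m), f s := by
  classical
  rw [det_mul_transpose_expand]
  set T : (m → E) → ℝ := fun g => (∏ i, A i (g i)) * Matrix.det (A.submatrix id g) with hT
  have hzero : ∀ g ∈ Finset.univ.filter (fun g : m → E => ¬ Injective g), T g = 0 := by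
    intro g hg
    rw [Finset.mem_filter] at hg
    obtain ⟨i, j, hgij, hij⟩ := Function.not_injective_iff.mp hg.2
    have : Matrix.det (A.submatrix id g) = 0 :=
      Matrix.det_zero_of_column_eq hij (fun k => by simp [Matrix.submatrix_apply, hgij])
    simp [hT, this]
  have hsplit : ∑ g : m → E, T g = ∑ g ∈ Finset.univ.filter (fun g => Injective g), T g := by
    rw [← Finset.sum_filter_add_sum_filter_not Finset.univ (fun g => Injective g) T,
      Finset.sum_congr rfl hzero]
    simp
  rw [hsplit]
  have hmaps : ∀ g ∈ Finset.univ.filter (fun g : m → E => Injective g),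
      Finset.image g Finset.univ ∈ Finset.univ.powersetCard (Fintype.card m) := by
    intro g hg
    rw [Finset.mem_filter] at hg
    rw [Finset.mem_powersetCard_univ, Finset.card_image_of_injective _ hg.2, Finset.card_univ]
  rw [← Finset.sum_fiberwise_of_maps_to hmaps T]
  refine Finset.sum_congr rfl fun s hs => ?_
  have hcard : Fintype.card {x // x ∈ s} = Fintype.card m := by
    rw [Fintype.card_coe, Finset.mem_powersetCard_univ.mp hs]
  have e₀ : m ≃ {x // x ∈ s} := (Fintype.equivOfCardEq hcard).symm
  rw [hf s hs e₀]
  set A₀ : Matrix m m ℝ := A.submatrix id (fun i => (e₀ i).1) with hA₀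
  have hbij : ∑ σ : Equiv.Perm m, T (fun x => (e₀ (σ x)).1)
      = ∑ g ∈ (Finset.univ.filter (fun g : m → E => Injective g)).filter
          (fun g => Finset.image g Finset.univ = s), T g := by
    refine Finset.sum_bij (fun (σ : Equiv.Perm m) _ => fun x => (e₀ (σ x)).1) ?_ ?_ ?_ ?_
    · intro σ _
      simp only [Finset.mem_filter, Finset.mem_filter, Finset.mem_univ, true_and]
      constructor
      · exact Subtype.val_injective.comp (e₀.injective.comp σ.injective)
      · apply Finset.eq_of_subset_of_card_le
        · intro x hx
          simp only [Finset.mem_image] at hx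
          obtain ⟨i, _, rfl⟩ := hx
          exact (e₀ (σ i)).2
        · have hinj2 : Injective (fun x => ((e₀ (σ x)) : E)) :=
            fun a b hab => σ.injective (e₀.injective (Subtype.val_injective hab))
          rw [Finset.card_image_of_injective _ hinj2,
            Finset.card_univ, Finset.mem_powersetCard_univ.mp hs]
    · intro σ _ τ _ hfun
      ext x
      have := congrFun hfun x
      exact e₀.injective (Subtype.val_injective this)
    · intro g hg
      simp only [Finset.mem_filter, Finset.mem_univ, true_and] at hg
      obtain ⟨hginj, hgim⟩ := hg
      have hmem : ∀ x, g x ∈ s := fun x => hgim ▸ Finset.mem_image_of_mem g (Finset.mem_univ x)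
      have hψ : Function.Bijective (fun x => (⟨g x, hmem x⟩ : {x // x ∈ s})) := by
        rw [Fintype.bijective_iff_injective_and_card]
        exact ⟨fun a b hab => hginj (congrArg Subtype.val hab), hcard.symm⟩
      refine ⟨(Equiv.ofBijective _ hψ).trans e₀.symm, Finset.mem_univ _, ?_⟩
      funext x
      simp [Equiv.ofBijective]
    · intro σ _
      rfl
  rw [← hbij]
  have hTσ : ∀ σ : Equiv.Perm m, T (fun x => (e₀ (σ x)).1)
      = ((Equiv.Perm.sign σ : ℤ) * ∏ i, A₀ i (σ i)) * Matrix.det A₀ := by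
    intro σ
    have hsub : A.submatrix id (fun x => (e₀ (σ x)).1) = A₀.submatrix id σ := rfl
    simp only [hT]
    rw [hsub, Matrix.det_permute']
    simp only [hA₀, Matrix.submatrix_apply, id_eq]
    push_cast
    ring
  simp_rw [hTσ, ← Finset.sum_mul]
  have hdet : ∑ σ : Equiv.Perm m, ((Equiv.Perm.sign σ : ℤ) : ℝ) * ∏ i, A₀ i (σ i)
      = Matrix.det A₀ := by
    conv_rhs => rw [← Matrix.det_transpose A₀, Matrix.det_apply' (A₀ᵀ)]
    rfl
  rw [hdet, sq]

end CB

section L3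
open SimpleGraph MTTaux
open scoped Classical
variable {V : Type*} [Fintype V] [DecidableEq V] [LinearOrder V]

lemma sum_indicator_dd (x₀ v : V) (s : Finset (Sym2 V))
    (hs : ∀ e ∈ s, ¬ e.IsDiag)
    (hvx : ¬ (fromEdgeSet (↑s : Set (Sym2 V))).Reachable v x₀) :
    ∀ e ∈ s, ∑ i : {w : V // w ≠ x₀},
      (if (fromEdgeSet (↑s : Set (Sym2 V))).Reachable v i.1 then (1 : ℝ) else 0) * dd i.1 e
      = 0 := by
  classical
  intro e he
  set H := fromEdgeSet (↑s : Set (Sym2 V)) with hH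
  set F : V → ℝ := fun u => (if H.Reachable v u then (1 : ℝ) else 0) * dd u e with hF
  have hFx₀ : F x₀ = 0 := by simp [hF, hvx]
  have hsub : ∑ i : {w : V // w ≠ x₀}, F i.1 = ∑ u ∈ Finset.univ.erase x₀, F u := by
    refine (Finset.sum_subtype _ (fun x => ?_) F).symm
    simp
  have hall : ∑ i : {w : V // w ≠ x₀}, F i.1 = ∑ u : V, F u := by
    rw [hsub, Finset.sum_erase_eq_sub (Finset.mem_univ x₀), hFx₀, sub_zero]
  rw [hall]
  induction e using Sym2.ind with
  | _ a b =>
    have hab : a ≠ b := fun h => hs _ he (by rw [h]; exact Sym2.mk_isDiag_iff.mpr rfl)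
    have hadj : H.Adj a b := by rw [hH, fromEdgeSet_adj]; exact ⟨he, hab⟩
    have hsplit : ∀ u : V, F u = (if u = a then F a else 0) + (if u = b then F b else 0) := by
      intro u
      rcases eq_or_ne u a with rfl | hua
      · simp [hab]
      rcases eq_or_ne u b with rfl | hub
      · simp [hab.symm, hua]
      · have : u ∉ s(a, b) := by simp [Sym2.mem_iff, hua, hub]
        simp [hua, hub, hF, dd_eq_zero_of_not_mem this]
    rw [Finset.sum_congr rfl (fun u _ => hsplit u), Finset.sum_add_distrib,
      Finset.sum_ite_eq' _ a, Finset.sum_ite_eq' _ b]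
    simp only [Finset.mem_univ, if_true]
    by_cases hra : H.Reachable v a
    · have hrb : H.Reachable v b := hra.trans hadj.reachable
      simp only [hF, hra, hrb, if_true, one_mul]
      exact dd_add_eq_zero hab
    · have hrb : ¬ H.Reachable v b := fun h => hra (h.trans hadj.symm.reachable)
      simp [hF, hra, hrb]

lemma det_eq_zero_of_not_connected (x₀ : V) (s : Finset (Sym2 V))
    (hs : ∀ e ∈ s, ¬ e.IsDiag) (g : {v : V // v ≠ x₀} → Sym2 V) (hg : ∀ i, g i ∈ s)
    (hnc : ¬ (fromEdgeSet (↑s : Set (Sym2 V))).Connected) :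
    Matrix.det (Matrix.of fun i j : {v : V // v ≠ x₀} => dd i.1 (g j)) = 0 := by
  classical
  set H := fromEdgeSet (↑s : Set (Sym2 V)) with hH
  have hv : ∃ v, ¬ H.Reachable x₀ v := by
    by_contra hc
    push_neg at hc
    refine hnc ?_
    rw [connected_iff]
    exact ⟨fun a b => (hc a).symm.trans (hc b), ⟨x₀⟩⟩
  obtain ⟨v, hv⟩ := hv
  have hvx : ¬ H.Reachable v x₀ := fun h => hv h.symm
  rw [← Matrix.exists_vecMul_eq_zero_iff]
  refine ⟨fun i => if H.Reachable v i.1 then 1 else 0, ?_, ?_⟩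
  · intro h0
    have hvx₀ : v ≠ x₀ := fun h => hvx (h ▸ Reachable.refl v)
    have := congrFun h0 ⟨v, hvx₀⟩
    simp at this
  · funext j
    have := sum_indicator_dd x₀ v s hs hvx (g j) (hg j)
    simpa [Matrix.vecMul, dotProduct] using this

end L3

section L4
open SimpleGraph MTTaux Function
open scoped Classical

variable {V : Type*} [Fintype V] [DecidableEq V] [LinearOrder V]

lemma det_sq_eq_one_of_connected (x₀ : V) (s : Finset (Sym2 V))
    (hs : ∀ e ∈ s, ¬ e.IsDiag) (hcard : s.card = Fintype.card V - 1)
    (hconn : (fromEdgeSet (↑s : Set (Sym2 V))).Connected)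
    (g : {v : V // v ≠ x₀} → Sym2 V) (hg : ∀ i, g i ∈ s) (hginj : Injective g) :
    Matrix.det (Matrix.of fun i j : {v : V // v ≠ x₀} => dd i.1 (g j)) ^ 2 = 1 := by
  set H := fromEdgeSet (↑s : Set (Sym2 V)) with hH
  have hpar : ∀ v : V, v ≠ x₀ → ∃ u, H.Adj v u ∧ H.dist x₀ u + 1 = H.dist x₀ v := by
    intro v hv
    obtain ⟨p, hp⟩ := hconn.exists_walk_length_eq_dist x₀ v
    obtain ⟨u, hadj, q, hq⟩ := Walk.exists_eq_cons_of_ne hv p.reverse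
    have hlen : q.length + 1 = H.dist x₀ v := by
      have := p.length_reverse
      rw [hq] at this
      simp only [Walk.length_cons] at this
      omega
    have h1 : H.dist x₀ u ≤ q.length := by
      have := H.dist_le q.reverse
      simpa using this
    obtain ⟨r, hr⟩ := hconn.exists_walk_length_eq_dist x₀ u
    have h2 : H.dist x₀ v ≤ H.dist x₀ u + 1 := by
      have := H.dist_le (r.concat hadj.symm)
      rwa [Walk.length_concat, hr] at this
    exact ⟨u, hadj, by omega⟩
  set par : {v : V // v ≠ x₀} → V := fun i => Classical.choose (hpar i.1 i.2) with hparDef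
  have hparAdj : ∀ i, H.Adj i.1 (par i) := fun i => (Classical.choose_spec (hpar i.1 i.2)).1
  have hparDist : ∀ i, H.dist x₀ (par i) + 1 = H.dist x₀ i.1 :=
    fun i => (Classical.choose_spec (hpar i.1 i.2)).2
  set E' : {v : V // v ≠ x₀} → Sym2 V := fun i => s(i.1, par i) with hE'Def
  have hE's : ∀ i, E' i ∈ s := by
    intro i
    have := hparAdj i
    rw [hH, fromEdgeSet_adj] at this
    exact this.1
  have hE'inj : Injective E' := by
    intro i j hij
    rw [hE'Def] at hij
    simp only [Sym2.eq_iff] at hij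
    rcases hij with ⟨h1, _⟩ | ⟨h1, h2⟩
    · exact Subtype.ext h1
    · have d1 := hparDist i
      have d2 := hparDist j
      rw [← h1] at d2
      rw [h2] at d1
      omega
  have hcardV' : Fintype.card {v : V // v ≠ x₀} = Fintype.card V - 1 := by
    simp [Fintype.card_subtype_compl]
  have hcardS : Fintype.card {x // x ∈ s} = Fintype.card {v : V // v ≠ x₀} := by
    rw [Fintype.card_coe, hcard, hcardV']
  have hgb : Bijective (fun i => (⟨g i, hg i⟩ : {x // x ∈ s})) := by
    rw [Fintype.bijective_iff_injective_and_card]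
    exact ⟨fun a b hab => hginj (congrArg Subtype.val hab), hcardS.symm⟩
  have hEb : Bijective (fun i => (⟨E' i, hE's i⟩ : {x // x ∈ s})) := by
    rw [Fintype.bijective_iff_injective_and_card]
    exact ⟨fun a b hab => hE'inj (congrArg Subtype.val hab), hcardS.symm⟩
  set π : Equiv.Perm {v : V // v ≠ x₀} :=
    (Equiv.ofBijective _ hgb).trans (Equiv.ofBijective _ hEb).symm with hπDef
  have hgE : ∀ j, g j = E' (π j) := by
    intro j
    have : (⟨E' (π j), hE's _⟩ : {x // x ∈ s}) = ⟨g j, hg j⟩ := by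
      show (Equiv.ofBijective _ hEb) (π j) = _
      rw [hπDef]
      simp
    exact (congrArg Subtype.val this).symm
  set M : Matrix {v : V // v ≠ x₀} {v : V // v ≠ x₀} ℝ :=
    Matrix.of (fun i j : {v : V // v ≠ x₀} => dd i.1 (E' j)) with hMDef
  have hsubM : Matrix.of (fun i j : {v : V // v ≠ x₀} => dd i.1 (g j)) = M.submatrix id π := by
    ext i j
    simp [hMDef, hgE j]
  rw [hsubM, Matrix.det_permute', mul_pow]
  have hsign : ((Equiv.Perm.sign π : ℤ) : ℝ) ^ 2 = 1 := by
    rcases Int.units_eq_one_or (Equiv.Perm.sign π) with h | h <;> rw [h] <;> norm_num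
  rw [hsign, one_mul]
  have hC : 0 < Fintype.card V := Fintype.card_pos_iff.mpr ⟨x₀⟩
  set key : {v : V // v ≠ x₀} → ℕ :=
    fun i => H.dist x₀ i.1 * Fintype.card V + (Fintype.equivFin V i.1 : ℕ) with hkey
  have hidx : ∀ v : V, (Fintype.equivFin V v : ℕ) < Fintype.card V :=
    fun v => (Fintype.equivFin V v).2
  have hkeyinj : Injective key := by
    intro a b hab
    simp only [hkey] at hab
    have h1 := hidx a.1
    have h2 := hidx b.1
    have hd : H.dist x₀ a.1 = H.dist x₀ b.1 := by
      have ha' : (H.dist x₀ a.1 * Fintype.card V + (Fintype.equivFin V a.1 : ℕ))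
          / Fintype.card V = H.dist x₀ a.1 := by
        rw [mul_comm, Nat.mul_add_div hC, Nat.div_eq_of_lt (hidx a.1), add_zero]
      have hb' : (H.dist x₀ b.1 * Fintype.card V + (Fintype.equivFin V b.1 : ℕ))
          / Fintype.card V = H.dist x₀ b.1 := by
        rw [mul_comm, Nat.mul_add_div hC, Nat.div_eq_of_lt (hidx b.1), add_zero]
      rw [← ha', ← hb', hab]
    rw [hd] at hab
    have : (Fintype.equivFin V a.1 : ℕ) = (Fintype.equivFin V b.1 : ℕ) := by omega
    exact Subtype.ext ((Fintype.equivFin V).injective (Fin.ext this))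
  have hMne : ∀ i j, i ≠ j → M i j ≠ 0 → key i < key j := by
    intro i j hij hz
    have hmem : i.1 ∈ E' j := by
      by_contra hm
      exact hz (dd_eq_zero_of_not_mem hm)
    rw [hE'Def] at hmem
    rw [Sym2.mem_iff] at hmem
    rcases hmem with h | h
    · exact absurd (Subtype.ext h) hij
    · have hdj := hparDist j
      rw [← h] at hdj
      calc key i < H.dist x₀ i.1 * Fintype.card V + Fintype.card V :=
            Nat.add_lt_add_left (hidx i.1) _
        _ = (H.dist x₀ i.1 + 1) * Fintype.card V := by ring
        _ = H.dist x₀ j.1 * Fintype.card V := by rw [hdj]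
        _ ≤ key j := Nat.le_add_right _ _
  have htri : M.det = ∏ i, M i i := by
    letI : LinearOrder {v : V // v ≠ x₀} := LinearOrder.lift' key hkeyinj
    apply Matrix.det_of_upperTriangular
    intro i j hji
    by_contra hz
    have h2 : key j < key i := hji
    rcases eq_or_ne i j with rfl | hij
    · omega
    · have h1 : key i < key j := hMne i j hij hz
      omega
  rw [htri, ← Finset.prod_pow]
  have hone : ∀ i : {v : V // v ≠ x₀}, M i i ^ 2 = 1 := by
    intro i
    have hne : i.1 ≠ par i := (hparAdj i).ne
    simp only [hMDef, hE'Def, Matrix.of_apply]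
    exact dd_sq hne
  rw [Finset.prod_congr rfl (fun i _ => hone i), Finset.prod_const_one]

end L4

open SimpleGraph MTTaux MTTaux2

/-- Kirchhoff's matrix-tree theorem: the number of spanning trees of a finite connected
simple graph equals the determinant of the combinatorial Laplacian with the row and
column of `x₀` deleted. -/
theorem stmt9 {V : Type*} [Fintype V] [DecidableEq V] (G : SimpleGraph V)
    [DecidableRel G.Adj] (hconn : G.Connected) (x₀ : V) :
    (Set.ncard {T : Finset (Sym2 V) | ↑T ⊆ G.edgeSet ∧ T.card = Fintype.card V - 1 ∧
        (SimpleGraph.fromEdgeSet (↑T : Set (Sym2 V))).Connected} : ℝ) =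
      Matrix.det ((G.lapMatrix ℝ).submatrix (fun i : {v : V // v ≠ x₀} => (i : V))
        (fun i : {v : V // v ≠ x₀} => (i : V))) := by
  classical
  letI : LinearOrder V := LinearOrder.lift' (Fintype.equivFin V) (Fintype.equivFin V).injective
  set m := {v : V // v ≠ x₀}
  set A : Matrix m {e // e ∈ G.edgeFinset} ℝ :=
    Matrix.of (fun i e => dd i.1 e.1) with hA
  have hcardm : Fintype.card m = Fintype.card V - 1 := by
    simp [m, Fintype.card_subtype_compl]
  -- the reduced Laplacian is A * Aᵀ
  have hlap : (G.lapMatrix ℝ).submatrix (fun i : m => (i : V)) (fun i : m => (i : V))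
      = A * Aᵀ := by
    ext i j
    rw [Matrix.mul_apply]
    simp only [Matrix.submatrix_apply, Matrix.transpose_apply, hA, Matrix.of_apply]
    rw [← sum_dd_mul_dd G i.1 j.1]
    exact (Finset.sum_coe_sort G.edgeFinset (fun e => dd i.1 e * dd j.1 e)).symm
  rw [hlap]
  set emb : {e // e ∈ G.edgeFinset} ↪ Sym2 V :=
    Function.Embedding.subtype (fun e => e ∈ G.edgeFinset) with hemb
  set f : Finset {e // e ∈ G.edgeFinset} → ℝ :=
    fun s' => if (fromEdgeSet (↑(s'.map emb) : Set (Sym2 V))).Connected then 1 else 0 with hf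
  rw [cauchyBinet_self A f ?hf]
  case hf =>
    intro s' hs' e₀
    set T : Finset (Sym2 V) := s'.map emb with hT
    have hTmem : ∀ e ∈ T, e ∈ G.edgeFinset := by
      intro e he
      rw [hT, Finset.mem_map] at he
      obtain ⟨x, _, rfl⟩ := he
      exact x.2
    have hTd : ∀ e ∈ T, ¬ e.IsDiag := by
      intro e he
      exact G.not_isDiag_of_mem_edgeSet ((G.mem_edgeFinset).mp (hTmem e he))
    have hTcard : T.card = Fintype.card V - 1 := by
      rw [hT, Finset.card_map, Finset.mem_powersetCard_univ.mp hs', hcardm]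
    set g : m → Sym2 V := fun j => ((e₀ j).1).1 with hg
    have hgmem : ∀ j, g j ∈ T := by
      intro j
      rw [hT]
      exact Finset.mem_map_of_mem emb (e₀ j).2
    have hginj : Function.Injective g := by
      intro a b hab
      exact e₀.injective (Subtype.ext (Subtype.ext hab))
    have hmat : A.submatrix id (fun i => (e₀ i).1)
        = Matrix.of (fun i j : m => dd i.1 (g j)) := rfl
    rw [hmat]
    by_cases hc : (fromEdgeSet (↑T : Set (Sym2 V))).Connected
    · rw [hf]
      simp only [← hT, hc, if_true]
      exact (det_sq_eq_one_of_connected x₀ T hTd hTcard hc g hgmem hginj).symm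
    · rw [hf]
      simp only [← hT, hc, if_false]
      rw [det_eq_zero_of_not_connected x₀ T hTd g hgmem hc]
      norm_num
  -- now count
  rw [hf]
  rw [Finset.sum_boole]
  set P : Finset (Sym2 V) → Prop := fun T => ↑T ⊆ G.edgeSet ∧ T.card = Fintype.card V - 1 ∧
      (fromEdgeSet (↑T : Set (Sym2 V))).Connected with hP
  have hset : {T : Finset (Sym2 V) | ↑T ⊆ G.edgeSet ∧ T.card = Fintype.card V - 1 ∧
      (fromEdgeSet (↑T : Set (Sym2 V))).Connected} = ↑(Finset.univ.filter P) := by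
    ext T
    simp [hP]
  rw [hset, Set.ncard_coe_finset]
  congr 1
  refine (Finset.card_bij (fun s' _ => s'.map emb) ?_ ?_ ?_).symm
  · intro s' hs'
    rw [Finset.mem_filter] at hs'
    obtain ⟨hs1, hs2⟩ := hs'
    rw [Finset.mem_filter]
    refine ⟨Finset.mem_univ _, ?_, ?_, hs2⟩
    · intro e he
      rw [Finset.mem_coe, Finset.mem_map] at he
      obtain ⟨x, _, rfl⟩ := he
      exact (G.mem_edgeFinset).mp x.2
    · rw [Finset.card_map, Finset.mem_powersetCard_univ.mp hs1, hcardm]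
  · intro a ha b hb hab
    exact Finset.map_injective emb hab
  · intro T hT
    rw [Finset.mem_filter, hP] at hT
    obtain ⟨-, hT1, hT2, hT3⟩ := hT
    have hsubE : ∀ e ∈ T, e ∈ G.edgeFinset := fun e he =>
      (G.mem_edgeFinset).mpr (hT1 he)
    refine ⟨T.subtype (fun e => e ∈ G.edgeFinset), ?_, ?_⟩
    · have hmapeq : (T.subtype (fun e => e ∈ G.edgeFinset)).map emb = T := by
        rw [hemb, Finset.subtype_map, Finset.filter_true_of_mem hsubE]
      rw [Finset.mem_filter]
      constructor
      · rw [Finset.mem_powersetCard_univ]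
        have := congrArg Finset.card hmapeq
        rw [Finset.card_map] at this
        rw [this, hT2, hcardm]
      · rw [hmapeq]
        exact hT3
    · show (T.subtype (fun e => e ∈ G.edgeFinset)).map emb = T
      rw [hemb, Finset.subtype_map, Finset.filter_true_of_mem hsubE]
end

section
/- Let K be a positive integer and k_1,…,k_n positive integers with k_1 + ⋯ + k_n = 2K. Then Σ (2^B · K!)/(a_1!⋯a_n! · Π_{i<j} b_{ij}!) = (2K)!/(k_1!⋯k_n!), where the sum is over all nonnegative integers a_1,…,a_n and {b_{ij} : 1 ≤ i < j ≤ n} satisfying k_j = 2a_j + Σ_{i≠j} b_{ij} (with b_{ji} = b_{ij}), and B = Σ_{i<j} b_{ij}. -/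
open scoped BigOperators
open Finset MvPolynomial

namespace Stmt12Aux

variable {n : ℕ}

abbrev Pairs (n : ℕ) := {p : Fin n × Fin n // p.1 < p.2}
abbrev Idx (n : ℕ) := Fin n ⊕ Pairs n

noncomputable def G (n : ℕ) : Idx n → MvPolynomial (Fin n) ℕ :=
  Sum.elim (fun j => X j * X j) (fun p => 2 * (X p.1.1 * X p.1.2))

lemma sum_pairs_eq_filter {M : Type*} [AddCommMonoid M] (f : Fin n × Fin n → M) :
    ∑ p : Pairs n, f p.1 = ∑ p ∈ univ.filter (fun p : Fin n × Fin n => p.1 < p.2), f p :=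
  (Finset.sum_subtype (univ.filter (fun p : Fin n × Fin n => p.1 < p.2))
    (p := fun p : Fin n × Fin n => p.1 < p.2) (by simp) f).symm

lemma prod_pairs_eq_filter {M : Type*} [CommMonoid M] (f : Fin n × Fin n → M) :
    ∏ p : Pairs n, f p.1 = ∏ p ∈ univ.filter (fun p : Fin n × Fin n => p.1 < p.2), f p :=
  (Finset.prod_subtype (univ.filter (fun p : Fin n × Fin n => p.1 < p.2))
    (p := fun p : Fin n × Fin n => p.1 < p.2) (by simp) f).symm

lemma sq_decomp (n : ℕ) :
    (∑ j : Fin n, (X j : MvPolynomial (Fin n) ℕ)) ^ 2 = ∑ t : Idx n, G n t := by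
  rw [sq, Finset.sum_mul_sum, Fintype.sum_sum_type]
  rw [← Finset.sum_product']
  rw [← Finset.sum_filter_add_sum_filter_not (univ ×ˢ univ)
    (fun p : Fin n × Fin n => p.1 = p.2)]
  rw [← Finset.sum_filter_add_sum_filter_not
    ((univ ×ˢ univ).filter (fun p : Fin n × Fin n => ¬ p.1 = p.2))
    (fun p : Fin n × Fin n => p.1 < p.2)]
  have hdiag : ∑ p ∈ (univ ×ˢ univ).filter (fun p : Fin n × Fin n => p.1 = p.2),
      (X p.1 * X p.2 : MvPolynomial (Fin n) ℕ) = ∑ j : Fin n, X j * X j := by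
    refine Finset.sum_nbij' (fun p => p.1) (fun j => (j, j)) ?_ ?_ ?_ ?_ ?_ <;>
      simp +contextual [Prod.ext_iff, eq_comm]
  have hlt : ((univ ×ˢ univ).filter (fun p : Fin n × Fin n => ¬ p.1 = p.2)).filter
        (fun p : Fin n × Fin n => p.1 < p.2)
      = univ.filter (fun p : Fin n × Fin n => p.1 < p.2) := by
    ext p
    simp only [Finset.mem_filter, Finset.mem_univ, Finset.mem_product, true_and, and_true]
    exact ⟨fun h => h.2, fun h => ⟨ne_of_lt h, h⟩⟩
  have hgt : ∑ p ∈ ((univ ×ˢ univ).filter (fun p : Fin n × Fin n => ¬ p.1 = p.2)).filter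
        (fun p : Fin n × Fin n => ¬ p.1 < p.2),
      (X p.1 * X p.2 : MvPolynomial (Fin n) ℕ)
      = ∑ p ∈ univ.filter (fun p : Fin n × Fin n => p.1 < p.2), X p.1 * X p.2 := by
    refine Finset.sum_nbij' (fun p => (p.2, p.1)) (fun p => (p.2, p.1)) ?_ ?_ ?_ ?_ ?_
    · intro a ha
      simp only [Finset.mem_filter, Finset.mem_univ, Finset.mem_product, true_and] at ha ⊢
      exact lt_of_le_of_ne (not_lt.mp ha.2) (Ne.symm ha.1)
    · intro a ha
      simp only [Finset.mem_filter, Finset.mem_univ, Finset.mem_product, true_and,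
        and_true] at ha ⊢
      exact ⟨(ne_of_lt ha).symm, not_lt.mpr (le_of_lt ha)⟩
    · intro a _; rfl
    · intro a _; rfl
    · intro a _; exact mul_comm _ _
  rw [hdiag, hlt, hgt,
    ← sum_pairs_eq_filter (fun p => (X p.1 * X p.2 : MvPolynomial (Fin n) ℕ))]
  simp only [G, Sum.elim_inl, Sum.elim_inr, two_mul, Finset.sum_add_distrib]
  try ring

lemma prod_monomial {α : Type*} (s : Finset α) (f : α → (Fin n →₀ ℕ)) :
    ∏ i ∈ s, (monomial (f i) (1 : ℕ)) = monomial (∑ i ∈ s, f i) 1 := by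
  classical
  induction s using Finset.cons_induction with
  | empty => simp
  | cons a s ha ih => rw [Finset.prod_cons, Finset.sum_cons, ih, monomial_mul, one_mul]

noncomputable def Dg (c : Idx n → ℕ) : Fin n →₀ ℕ :=
  (∑ j : Fin n, c (Sum.inl j) • (Finsupp.single j 1 + Finsupp.single j 1)) +
    ∑ p : Pairs n, c (Sum.inr p) • (Finsupp.single p.1.1 1 + Finsupp.single p.1.2 1)

lemma Dg_apply (c : Idx n → ℕ) (j : Fin n) :
    Dg c j = 2 * c (Sum.inl j)
      + ∑ p : Pairs n, (if p.1.1 = j then c (Sum.inr p) else 0)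
      + ∑ p : Pairs n, (if p.1.2 = j then c (Sum.inr p) else 0) := by
  simp [Dg, Finsupp.finset_sum_apply, Finsupp.single_apply, smul_eq_mul, mul_add,
    mul_ite, mul_one, mul_zero, Finset.sum_add_distrib, Finset.sum_ite_eq', two_mul, add_assoc]

lemma G_pow_inl (j : Fin n) (a : ℕ) :
    G n (Sum.inl j) ^ a = monomial (a • (Finsupp.single j 1 + Finsupp.single j 1)) (1 : ℕ) := by
  rw [G, Sum.elim_inl, X, monomial_mul, monomial_pow]
  simp

lemma G_pow_inr (p : Pairs n) (b : ℕ) :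
    G n (Sum.inr p) ^ b = (2 : MvPolynomial (Fin n) ℕ) ^ b *
      monomial (b • (Finsupp.single p.1.1 1 + Finsupp.single p.1.2 1)) (1 : ℕ) := by
  rw [G, Sum.elim_inr, mul_pow, X, X, monomial_mul, monomial_pow]
  simp

lemma prod_G_pow (c : Idx n → ℕ) :
    ∏ t : Idx n, G n t ^ c t =
      (2 : MvPolynomial (Fin n) ℕ) ^ (∑ p : Pairs n, c (Sum.inr p)) * monomial (Dg c) 1 := by
  rw [Fintype.prod_sum_type]
  simp_rw [G_pow_inl, G_pow_inr]
  rw [Finset.prod_mul_distrib, prod_monomial, prod_monomial, Finset.prod_pow_eq_pow_sum]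
  rw [mul_left_comm, monomial_mul, mul_one, Dg]

lemma coeff_2pow_mul (B : ℕ) (p : MvPolynomial (Fin n) ℕ) (m : Fin n →₀ ℕ) :
    coeff m ((2 : MvPolynomial (Fin n) ℕ) ^ B * p) = 2 ^ B * coeff m p := by
  have : ((2 : MvPolynomial (Fin n) ℕ)) ^ B = C ((2 : ℕ) ^ B) := by
    rw [map_pow]; norm_num
  rw [this, coeff_C_mul]

lemma single_sum_apply (m : Fin n → ℕ) (i : Fin n) :
    (∑ j : Fin n, Finsupp.single j (m j)) i = m i := by
  rw [Finsupp.finset_sum_apply]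
  simp [Finsupp.single_apply]

lemma coeff_P_pow (k : Fin n → ℕ) (K : ℕ) (hsum : ∑ j, k j = 2 * K) :
    coeff (Finsupp.equivFunOnFinite.symm k)
      ((∑ j : Fin n, (X j : MvPolynomial (Fin n) ℕ)) ^ (2 * K)) = Nat.multinomial univ k := by
  classical
  rw [Finset.sum_pow_eq_sum_piAntidiag, coeff_sum]
  have hmono : ∀ m : Fin n → ℕ, ∏ j : Fin n, (X j : MvPolynomial (Fin n) ℕ) ^ m j
      = monomial (∑ j : Fin n, Finsupp.single j (m j)) 1 := by
    intro m; simp_rw [X_pow_eq_monomial]; exact prod_monomial _ _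
  have hiff : ∀ m : Fin n → ℕ,
      (∑ j : Fin n, Finsupp.single j (m j)) = Finsupp.equivFunOnFinite.symm k ↔ m = k := by
    intro m
    constructor
    · intro h; funext i
      have := DFunLike.congr_fun h i
      rwa [single_sum_apply, Finsupp.coe_equivFunOnFinite_symm] at this
    · rintro rfl; ext i
      rw [single_sum_apply, Finsupp.coe_equivFunOnFinite_symm]
  have hc : ∀ m : Fin n → ℕ,
      coeff (Finsupp.equivFunOnFinite.symm k)
        ((Nat.multinomial univ m : MvPolynomial (Fin n) ℕ) * ∏ j : Fin n, X j ^ m j)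
      = if m = k then Nat.multinomial univ m else 0 := by
    intro m
    rw [hmono, ← C_eq_coe_nat, coeff_C_mul, coeff_monomial]
    simp only [hiff]
    split_ifs <;> simp
  simp_rw [hc]
  rw [Finset.sum_ite_eq' (univ.piAntidiag (2 * K)) k (fun x => Nat.multinomial univ x),
    if_pos (Finset.mem_piAntidiag.mpr ⟨hsum, fun i _ => Finset.mem_univ i⟩)]

lemma coeff_sq_pow (k : Fin n → ℕ) (K : ℕ) :
    coeff (Finsupp.equivFunOnFinite.symm k) ((∑ t : Idx n, G n t) ^ K)
      = ∑ c ∈ (Finset.piAntidiag (univ : Finset (Idx n)) K).filter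
          (fun c => ∀ j, k j = 2 * c (Sum.inl j)
            + ∑ p : Pairs n, (if p.1.1 = j then c (Sum.inr p) else 0)
            + ∑ p : Pairs n, (if p.1.2 = j then c (Sum.inr p) else 0)),
        2 ^ (∑ p : Pairs n, c (Sum.inr p)) * Nat.multinomial univ c := by
  classical
  rw [Finset.sum_pow_eq_sum_piAntidiag, coeff_sum, Finset.sum_filter]
  refine Finset.sum_congr rfl fun c _ => ?_
  have hiff : Dg c = Finsupp.equivFunOnFinite.symm k ↔
      (∀ j, k j = 2 * c (Sum.inl j)
        + ∑ p : Pairs n, (if p.1.1 = j then c (Sum.inr p) else 0)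
        + ∑ p : Pairs n, (if p.1.2 = j then c (Sum.inr p) else 0)) := by
    rw [DFunLike.ext_iff]
    refine forall_congr' fun j => ?_
    rw [Dg_apply, Finsupp.coe_equivFunOnFinite_symm, eq_comm]
  rw [prod_G_pow, ← C_eq_coe_nat, coeff_C_mul, coeff_2pow_mul, coeff_monomial]
  simp only [hiff]
  split_ifs <;> simp [mul_comm, mul_assoc, mul_left_comm]

lemma key (K : ℕ) (k : Fin n → ℕ) (hsum : ∑ j, k j = 2 * K) :
    ∑ c ∈ (Finset.piAntidiag (univ : Finset (Idx n)) K).filter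
        (fun c => ∀ j, k j = 2 * c (Sum.inl j)
          + ∑ p : Pairs n, (if p.1.1 = j then c (Sum.inr p) else 0)
          + ∑ p : Pairs n, (if p.1.2 = j then c (Sum.inr p) else 0)),
      2 ^ (∑ p : Pairs n, c (Sum.inr p)) * Nat.multinomial univ c
    = Nat.multinomial univ k := by
  have h := coeff_P_pow k K hsum
  rw [pow_mul, sq_decomp] at h
  rw [← coeff_sq_pow, h]

lemma pair_row_sum (b : Fin n → Fin n → ℕ) (hsym : ∀ i j, b i j = b j i)
    (hdiag : ∀ i, b i i = 0) (j : Fin n) :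
    (∑ p : Pairs n, if p.1.1 = j then b p.1.1 p.1.2 else 0)
      + (∑ p : Pairs n, if p.1.2 = j then b p.1.1 p.1.2 else 0) = ∑ i, b i j := by
  rw [sum_pairs_eq_filter (fun p => if p.1 = j then b p.1 p.2 else 0),
    sum_pairs_eq_filter (fun p => if p.2 = j then b p.1 p.2 else 0),
    Finset.sum_filter, Finset.sum_filter]
  have h1 : ∀ u v : Fin n, (if u < v then if u = j then b u v else 0 else 0)
      = if u = j then (if j < v then b j v else 0) else 0 := by
    intro u v
    by_cases h : u = j
    · subst h; by_cases h2 : u < v <;> simp [h2]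
    · simp [h]
  have h2 : ∀ u v : Fin n, (if u < v then if v = j then b u v else 0 else 0)
      = if v = j then (if u < j then b u j else 0) else 0 := by
    intro u v
    by_cases h : v = j
    · subst h; by_cases h2 : u < v <;> simp [h2]
    · simp [h]
  simp_rw [h1, h2]
  rw [Fintype.sum_prod_type, Fintype.sum_prod_type, Finset.sum_comm]
  simp only [Finset.sum_ite_eq', Finset.mem_univ, if_true]
  rw [← Finset.sum_add_distrib]
  refine Finset.sum_congr rfl fun i _ => ?_
  rcases lt_trichotomy i j with h | h | h
  · rw [if_neg (asymm h), if_pos h, zero_add]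
  · subst h; simp [hdiag]
  · rw [if_pos h, if_neg (asymm h), add_zero, hsym]

lemma double_row_sum (b : Fin n → Fin n → ℕ) (hsym : ∀ i j, b i j = b j i)
    (hdiag : ∀ i, b i i = 0) :
    ∑ j, ∑ i, b i j = 2 * ∑ p : Pairs n, b p.1.1 p.1.2 := by
  have h : ∀ j, ∑ i, b i j = (∑ p : Pairs n, if p.1.1 = j then b p.1.1 p.1.2 else 0)
      + (∑ p : Pairs n, if p.1.2 = j then b p.1.1 p.1.2 else 0) :=
    fun j => (pair_row_sum b hsym hdiag j).symm
  simp_rw [h]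
  rw [Finset.sum_add_distrib, Finset.sum_comm, Finset.sum_comm (γ := Fin n)]
  simp [Finset.sum_ite_eq', two_mul]

/-- reconstruct the symmetric matrix from `c` -/
def bmat (c : Idx n → ℕ) : Fin n → Fin n → ℕ := fun i j =>
  if h : i < j then c (Sum.inr ⟨(i, j), h⟩)
  else if h : j < i then c (Sum.inr ⟨(j, i), h⟩) else 0

lemma bmat_symm (c : Idx n → ℕ) : ∀ i j, bmat c i j = bmat c j i := by
  intro i j
  unfold bmat
  rcases lt_trichotomy i j with h | h | h
  · rw [dif_pos h, dif_neg (asymm h), dif_pos h]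
  · subst h; rfl
  · rw [dif_neg (asymm h), dif_pos h, dif_pos h]

lemma bmat_diag (c : Idx n → ℕ) : ∀ i, bmat c i i = 0 := by
  intro i; unfold bmat
  rw [dif_neg (lt_irrefl i), dif_neg (lt_irrefl i)]

lemma bmat_pair (c : Idx n → ℕ) (p : Pairs n) : bmat c p.1.1 p.1.2 = c (Sum.inr p) := by
  unfold bmat
  rw [dif_pos p.2]

end Stmt12Aux

open Stmt12Aux

set_option maxHeartbeats 1000000 in
/-- Combinatorial identity: for positive integers `k₁,…,kₙ` with `k₁+⋯+kₙ = 2K`,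
`Σ 2^B K!/(a₁!⋯aₙ! Π_{i<j} b_{ij}!) = (2K)!/(k₁!⋯kₙ!)`, the sum being over nonnegative
`a_j` and symmetric, diagonal-free `b_{ij}` with `k_j = 2a_j + Σ_{i≠j} b_{ij}`, and
`B = Σ_{i<j} b_{ij}`. -/
theorem stmt12 (n K : ℕ) (hK : 0 < K) (k : Fin n → ℕ) (hk : ∀ j, 0 < k j)
    (hsum : ∑ j, k j = 2 * K) :
    (∑' x : {x : (Fin n → ℕ) × (Fin n → Fin n → ℕ) //
        (∀ i j, x.2 i j = x.2 j i) ∧ (∀ i, x.2 i i = 0) ∧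
        ∀ j, k j = 2 * x.1 j + ∑ i, x.2 i j},
      ((2 : ℝ) ^ (∑ pr ∈ Finset.univ.filter (fun pr : Fin n × Fin n => pr.1 < pr.2),
          x.1.2 pr.1 pr.2) * (K.factorial : ℝ)) /
        ((((∏ i, (x.1.1 i).factorial) *
            ∏ pr ∈ Finset.univ.filter (fun pr : Fin n × Fin n => pr.1 < pr.2),
              (x.1.2 pr.1 pr.2).factorial : ℕ) : ℝ)))
      = ((2 * K).factorial : ℝ) / ∏ j, ((k j).factorial : ℝ) := by
  classical
  set P : (Fin n → ℕ) × (Fin n → Fin n → ℕ) → Prop := fun x =>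
    (∀ i j, x.2 i j = x.2 j i) ∧ (∀ i, x.2 i i = 0) ∧
      ∀ j, k j = 2 * x.1 j + ∑ i, x.2 i j with hP
  have hkle : ∀ j, k j ≤ 2 * K := by
    intro j
    rw [← hsum]
    exact Finset.single_le_sum (f := k) (fun i _ => Nat.zero_le _) (Finset.mem_univ j)
  have hfin : {x | P x}.Finite := by
    refine Set.Finite.subset (Set.finite_Icc
      ((fun _ => 0, fun _ _ => 0) : (Fin n → ℕ) × (Fin n → Fin n → ℕ))
      ((fun _ => 2 * K, fun _ _ => 2 * K))) ?_
    rintro ⟨a, b⟩ ⟨hsym, hdiag, hcon⟩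
    refine ⟨⟨fun j => Nat.zero_le _, fun i j => Nat.zero_le _⟩, ⟨fun j => ?_, fun i => ?_⟩⟩
    · have h2 := hcon j
      have h3 := hkle j
      show a j ≤ 2 * K
      simp only at h2
      omega
    · intro j
      have h1 : b i j ≤ ∑ i', b i' j :=
        Finset.single_le_sum (f := fun i' => b i' j) (fun _ _ => Nat.zero_le _)
          (Finset.mem_univ i)
      have h2 := hcon j
      have h3 := hkle j
      show b i j ≤ 2 * K
      simp only at h2
      omega
  haveI : Fintype {x : (Fin n → ℕ) × (Fin n → Fin n → ℕ) // P x} := hfin.fintype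
  rw [tsum_fintype]
  -- right-hand side
  have hRHS : ((2 * K).factorial : ℝ) / ∏ j, ((k j).factorial : ℝ)
      = ((Nat.multinomial univ k : ℕ) : ℝ) := by
    have hspec := Nat.multinomial_spec univ k
    rw [hsum] at hspec
    rw [← hspec]
    push_cast
    rw [mul_div_cancel_left₀]
    positivity
  rw [hRHS, ← key K k hsum]
  rw [Nat.cast_sum]
  have hsumc : ∀ (a : Fin n → ℕ) (b : Fin n → Fin n → ℕ), P (a, b) →
      (∑ j, a j) + (∑ p : Pairs n, b p.1.1 p.1.2) = K := by
    rintro a b ⟨hsym2, hdiag2, hcon⟩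
    simp only at hcon
    have hdouble := double_row_sum b hsym2 hdiag2
    have h2 : ∑ j, k j = 2 * ∑ j, a j + 2 * ∑ p : Pairs n, b p.1.1 p.1.2 := by
      calc ∑ j, k j = ∑ j, (2 * a j + ∑ i, b i j) := Finset.sum_congr rfl fun j _ => hcon j
        _ = ∑ j, 2 * a j + ∑ j, ∑ i, b i j := Finset.sum_add_distrib
        _ = 2 * ∑ j, a j + 2 * ∑ p : Pairs n, b p.1.1 p.1.2 := by
            rw [hdouble, ← Finset.mul_sum]
    rw [hsum] at h2
    omega
  refine Finset.sum_bij'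
    (i := fun (x : {x : (Fin n → ℕ) × (Fin n → Fin n → ℕ) // P x}) _ =>
      Sum.elim x.1.1 (fun p : Pairs n => x.1.2 p.1.1 p.1.2))
    (j := fun c hc => ⟨(fun j => c (Sum.inl j), bmat c), ?_⟩) ?_ ?_ ?_ ?_ ?_
  · -- P (Ψ c)
    refine ⟨bmat_symm c, bmat_diag c, fun j => ?_⟩
    have hc' := (Finset.mem_filter.mp hc).2 j
    show k j = 2 * c (Sum.inl j) + ∑ i, bmat c i j
    rw [← pair_row_sum (bmat c) (bmat_symm c) (bmat_diag c) j]
    simp only [bmat_pair]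
    omega
  · -- membership of Φ x
    rintro ⟨⟨a, b⟩, hx⟩ -
    obtain ⟨hsym2, hdiag2, hcon⟩ := hx
    simp only at hcon
    refine Finset.mem_filter.mpr ⟨Finset.mem_piAntidiag.mpr ⟨?_, fun i _ => Finset.mem_univ i⟩,
      fun j => ?_⟩
    · rw [Fintype.sum_sum_type]
      exact hsumc a b ⟨hsym2, hdiag2, hcon⟩
    · simp only [Sum.elim_inl, Sum.elim_inr]
      rw [add_assoc, pair_row_sum b hsym2 hdiag2 j]
      exact hcon j
  · intro c hc
    exact Finset.mem_univ _
  · -- left inverse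
    rintro ⟨⟨a, b⟩, hx⟩ -
    obtain ⟨hsym2, hdiag2, hcon⟩ := hx
    simp only at hsym2 hdiag2
    apply Subtype.ext
    refine Prod.ext rfl ?_
    funext i j
    show bmat (Sum.elim a fun p : Pairs n => b p.1.1 p.1.2) i j = b i j
    unfold bmat
    rcases lt_trichotomy i j with h | h | h
    · rw [dif_pos h, Sum.elim_inr]
    · subst h
      rw [dif_neg (lt_irrefl i), dif_neg (lt_irrefl i)]
      exact (hdiag2 i).symm
    · rw [dif_neg (asymm h), dif_pos h]
      exact (hsym2 i j).symm
  · -- right inverse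
    intro c hc
    funext t
    cases t with
    | inl j => rfl
    | inr p => exact bmat_pair c p
  · -- values match
    rintro ⟨⟨a, b⟩, hx⟩ -
    obtain ⟨hsym2, hdiag2, hcon⟩ := hx
    push_cast
    simp only [Sum.elim_inl, Sum.elim_inr]
    have hB : (∑ pr ∈ Finset.univ.filter (fun pr : Fin n × Fin n => pr.1 < pr.2), b pr.1 pr.2)
        = ∑ p : Pairs n, b p.1.1 p.1.2 :=
      (sum_pairs_eq_filter (fun pr => b pr.1 pr.2)).symm
    have hprod : (∏ i, (a i).factorial) *
        ∏ pr ∈ Finset.univ.filter (fun pr : Fin n × Fin n => pr.1 < pr.2),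
          (b pr.1 pr.2).factorial
        = ∏ t : Idx n, ((Sum.elim a (fun p : Pairs n => b p.1.1 p.1.2)) t).factorial := by
      rw [Fintype.prod_sum_type]
      simp only [Sum.elim_inl, Sum.elim_inr]
      rw [prod_pairs_eq_filter (fun pr => (b pr.1 pr.2).factorial)]
    have hspec := Nat.multinomial_spec (univ : Finset (Idx n))
      (Sum.elim a (fun p : Pairs n => b p.1.1 p.1.2))
    have hsK : ∑ t : Idx n, (Sum.elim a (fun p : Pairs n => b p.1.1 p.1.2)) t = K := by
      rw [Fintype.sum_sum_type]
      exact hsumc a b ⟨hsym2, hdiag2, hcon⟩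
    rw [hsK] at hspec
    have hKfac : (K.factorial : ℝ)
        = (((∏ i, (a i).factorial) *
            ∏ pr ∈ Finset.univ.filter (fun pr : Fin n × Fin n => pr.1 < pr.2),
              (b pr.1 pr.2).factorial : ℕ) : ℝ) *
          (Nat.multinomial (univ : Finset (Idx n))
            (Sum.elim a (fun p : Pairs n => b p.1.1 p.1.2)) : ℝ) := by
      rw [← hspec, hprod]
      push_cast
      ring
    show ((2 : ℝ) ^ _ * (K.factorial : ℝ)) / _ = _
    rw [hKfac, hB]
    push_cast
    rw [mul_div_assoc, mul_div_cancel_left₀]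
    positivity
end

section
/- Let A be a finite set, E the set of undirected edges on A (including self-edges), and let {J_x : x ∈ A} be independent random signs with P(J_x = 1) = P(J_x = −1) = 1/2; set J_e = J_x J_y for an edge e with endpoints x,y (J_e = 1 for a self-edge). Then for any ρ ∈ ℂ^E, E[ exp( Σ_{e∈E} J_e ρ_e ) ] = Σ_{k̄ ∈ 𝒞} Π_{e∈E} ρ_e^{k_e}/k_e!, where 𝒞 is the set of currents: k̄ ∈ ℕ^E such that for every vertex x, the number n_x(k̄) = (1/2) Σ_e k_e n_e(x) is an integer (n_e(x) = 2 if e is a self-edge at x, 1 if e joins x to a different vertex, 0 otherwise). -/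
open scoped BigOperators

set_option maxHeartbeats 1000000

universe u

private lemma aux_prod_tsum : ∀ (ι : Type u) [Fintype ι] (f : ι → ℕ → ℂ),
    (∀ i, Summable fun n => ‖f i n‖) →
    (Summable fun k : ι → ℕ => ‖∏ i, f i (k i)‖) ∧
      ((∏ i, ∑' n, f i n) = ∑' k : ι → ℕ, ∏ i, f i (k i)) := by
  refine Fintype.induction_empty_option ?_ ?_ ?_
  · intro α β _ e H
    letI : Fintype α := Fintype.ofEquiv β e.symm
    intro f hf
    obtain ⟨h1, h2⟩ := H (fun a => f (e a)) (fun a => hf (e a))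
    set E := Equiv.arrowCongr e (Equiv.refl ℕ) with hEdef
    have key : ∀ k : α → ℕ, ∏ b, f b (E k b) = ∏ a, f (e a) (k a) := by
      intro k
      rw [← e.prod_comp (fun b => f b (E k b))]
      refine Finset.prod_congr rfl fun a _ => ?_
      simp [hEdef, Equiv.arrowCongr]
    constructor
    · refine E.summable_iff.mp (h1.congr fun k => ?_)
      simp only [Function.comp_apply]
      exact (congrArg norm (key k)).symm
    · rw [← e.prod_comp (fun b => ∑' n, f b n), h2,
        ← E.tsum_eq (fun K : β → ℕ => ∏ b, f b (K b))]
      exact tsum_congr fun k => (key k).symm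
  · intro f hf
    haveI : Unique (PEmpty.{u + 1} → ℕ) :=
      ⟨⟨fun x => x.elim⟩, fun g => funext fun x => x.elim⟩
    constructor
    · exact Summable.of_finite
    · rw [tsum_eq_single (default : PEmpty → ℕ)
        (fun b hb => absurd (Subsingleton.elim b default) hb)]
      simp
  · intro α _ H f hf
    obtain ⟨h1, h2⟩ := H (fun a => f (some a)) (fun a => hf (some a))
    set E := (Equiv.piOptionEquivProd (β := fun _ : Option α => ℕ)).symm with hEdef
    have key : ∀ z : ℕ × (α → ℕ),
        ∏ i, f i (E z i) = f none z.1 * ∏ a, f (some a) (z.2 a) := by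
      intro z
      rw [Fintype.prod_option]
      simp [hEdef, Equiv.piOptionEquivProd]
    have hs : Summable fun z : ℕ × (α → ℕ) =>
        ‖f none z.1 * ∏ a, f (some a) (z.2 a)‖ :=
      Summable.mul_norm (f := fun n => f none n)
        (g := fun k : α → ℕ => ∏ a, f (some a) (k a)) (hf none) h1
    constructor
    · refine E.summable_iff.mp (hs.congr fun z => ?_)
      simp only [Function.comp_apply]
      exact (congrArg norm (key z)).symm
    · rw [Fintype.prod_option, h2,
        tsum_mul_tsum_of_summable_norm (f := fun n => f none n)
          (g := fun k : α → ℕ => ∏ a, f (some a) (k a)) (hf none) h1,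
        ← E.tsum_eq (fun K : Option α → ℕ => ∏ i, f i (K i))]
      exact tsum_congr fun z => (key z).symm

/-- Incidence count `n_e(x)`: `2` for a self-edge at `x`, `1` if `e` joins `x` to a
different vertex, `0` otherwise. -/
def edgeInc {A : Type*} [DecidableEq A] (x : A) : Sym2 A → ℕ :=
  Sym2.lift ⟨fun a b => (if a = x then 1 else 0) + (if b = x then 1 else 0),
    fun a b => by exact add_comm _ _⟩

/-- The current/switching expansion for independent symmetric random signs:
`E[exp(Σ_e J_e ρ_e)] = Σ_{currents k} Π_e ρ_e^{k_e}/k_e!`. -/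
theorem stmt13 {A : Type*} [Fintype A] [DecidableEq A] (ρ : Sym2 A → ℂ) :
    (∑ J : A → Bool,
        Complex.exp (∑ e : Sym2 A,
          Sym2.lift ⟨fun x y => (if J x then (1 : ℂ) else -1) * (if J y then 1 else -1),
            fun x y => by exact mul_comm _ _⟩ e * ρ e)) / (2 : ℂ) ^ Fintype.card A
      = ∑' k : {k : Sym2 A → ℕ // ∀ x : A, 2 ∣ ∑ e : Sym2 A, k e * edgeInc x e},
          ∏ e : Sym2 A, ρ e ^ (k.1 e) / ((k.1 e).factorial : ℂ) := by
  classical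
  set F : (Sym2 A → ℕ) → ℂ := fun k => ∏ e, ρ e ^ (k e) / ((k e).factorial : ℂ) with hF
  have hsummable : ∀ c : ℂ, Summable fun n => ‖c ^ n / (n.factorial : ℂ)‖ := by
    intro c
    have : ∀ n : ℕ, ‖c ^ n / (n.factorial : ℂ)‖ = ‖c‖ ^ n / (n.factorial : ℝ) := by
      intro n
      rw [norm_div, norm_pow]
      norm_num
    simpa [this] using Real.summable_pow_div_factorial ‖c‖
  -- expansion of exp of a sum into a tsum over multi-indices
  have expand : ∀ g : Sym2 A → ℂ,
      (Summable fun k : Sym2 A → ℕ => ‖∏ e, g e ^ (k e) / ((k e).factorial : ℂ)‖) ∧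
        Complex.exp (∑ e, g e)
          = ∑' k : Sym2 A → ℕ, ∏ e, g e ^ (k e) / ((k e).factorial : ℂ) := by
    intro g
    obtain ⟨h1, h2⟩ := aux_prod_tsum (Sym2 A)
      (fun e n => g e ^ n / (n.factorial : ℂ)) (fun e => hsummable (g e))
    refine ⟨h1, ?_⟩
    rw [Complex.exp_sum, ← h2]
    refine Finset.prod_congr rfl fun e _ => ?_
    rw [Complex.exp_eq_exp_ℂ, NormedSpace.exp_eq_tsum_div]
  -- sign-product identity
  have signprod : ∀ (σ : A → ℂ) (k : Sym2 A → ℕ),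
      (∏ e : Sym2 A,
        (Sym2.lift ⟨fun x y => σ x * σ y, fun x y => by exact mul_comm _ _⟩ e) ^ (k e))
        = ∏ x : A, σ x ^ (∑ e : Sym2 A, k e * edgeInc x e) := by
    intro σ k
    have per : ∀ e : Sym2 A,
        (Sym2.lift ⟨fun x y => σ x * σ y, fun x y => by exact mul_comm _ _⟩ e) ^ (k e)
          = ∏ x : A, σ x ^ (k e * edgeInc x e) := by
      intro e
      refine Sym2.inductionOn e ?_
      intro a b
      have hinc : ∀ x : A, edgeInc x s(a, b)
          = (if a = x then 1 else 0) + (if b = x then 1 else 0) := fun x => rfl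
      have : ∀ x : A, σ x ^ (k s(a, b) * edgeInc x s(a, b))
          = (if a = x then σ x ^ k s(a, b) else 1) * (if b = x then σ x ^ k s(a, b) else 1) := by
        intro x
        rw [hinc, Nat.mul_add, pow_add]
        congr 1 <;> split <;> simp
      rw [Finset.prod_congr rfl fun x _ => this x, Finset.prod_mul_distrib,
        Finset.prod_ite_eq, Finset.prod_ite_eq]
      simp [mul_pow]
    rw [Finset.prod_congr rfl fun e _ => per e, Finset.prod_comm]
    exact Finset.prod_congr rfl fun x _ => Finset.prod_pow_eq_pow_sum _ _ _
  -- sum over sign configurations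
  have hS : ∀ k : Sym2 A → ℕ,
      (∑ J : A → Bool, ∏ x : A,
          (if J x then (1 : ℂ) else -1) ^ (∑ e : Sym2 A, k e * edgeInc x e))
        = if (∀ x : A, 2 ∣ ∑ e : Sym2 A, k e * edgeInc x e)
            then (2 : ℂ) ^ Fintype.card A else 0 := by
    intro k
    rw [← Fintype.prod_sum (fun x (b : Bool) =>
      (if b then (1 : ℂ) else -1) ^ (∑ e : Sym2 A, k e * edgeInc x e))]
    have hb : ∀ x : A,
        (∑ b : Bool, (if b then (1 : ℂ) else -1) ^ (∑ e : Sym2 A, k e * edgeInc x e))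
          = if 2 ∣ (∑ e : Sym2 A, k e * edgeInc x e) then 2 else 0 := by
      intro x
      rw [Fintype.sum_bool]
      by_cases h : 2 ∣ (∑ e : Sym2 A, k e * edgeInc x e)
      · have he : Even (∑ e : Sym2 A, k e * edgeInc x e) := (even_iff_two_dvd).mpr h
        rw [if_pos h, if_pos rfl, one_pow, if_neg (by simp), he.neg_one_pow]
        norm_num
      · have ho : Odd (∑ e : Sym2 A, k e * edgeInc x e) :=
          Nat.odd_iff.mpr (Nat.two_dvd_ne_zero.mp h)
        rw [if_neg h, if_pos rfl, one_pow, if_neg (by simp), ho.neg_one_pow]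
        ring
    by_cases hall : ∀ x : A, 2 ∣ ∑ e : Sym2 A, k e * edgeInc x e
    · rw [if_pos hall]
      calc ∏ x : A, (∑ b : Bool,
            (if b then (1 : ℂ) else -1) ^ (∑ e : Sym2 A, k e * edgeInc x e))
          = ∏ _x : A, (2 : ℂ) :=
            Finset.prod_congr rfl fun x _ => by rw [hb x, if_pos (hall x)]
        _ = (2 : ℂ) ^ Fintype.card A := by
            rw [Finset.prod_const, Finset.card_univ]
    · rw [if_neg hall]
      obtain ⟨x, hx⟩ := not_forall.mp hall
      exact Finset.prod_eq_zero (Finset.mem_univ x) (by rw [hb x, if_neg hx])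
  -- per-configuration expansion
  have hexp : ∀ J : A → Bool,
      Complex.exp (∑ e : Sym2 A,
          Sym2.lift ⟨fun x y => (if J x then (1 : ℂ) else -1) * (if J y then 1 else -1),
            fun x y => by exact mul_comm _ _⟩ e * ρ e)
        = ∑' k : Sym2 A → ℕ,
            (∏ e : Sym2 A,
              (Sym2.lift ⟨fun x y => (if J x then (1 : ℂ) else -1) * (if J y then 1 else -1),
                fun x y => by exact mul_comm _ _⟩ e) ^ (k e)) * F k := by
    intro J
    rw [(expand _).2]
    refine tsum_congr fun k => ?_
    simp only [hF, mul_pow, mul_div_assoc]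
    rw [Finset.prod_mul_distrib]
  have hJsum : ∀ J : A → Bool,
      Summable fun k : Sym2 A → ℕ =>
        (∏ e : Sym2 A,
          (Sym2.lift ⟨fun x y => (if J x then (1 : ℂ) else -1) * (if J y then 1 else -1),
            fun x y => by exact mul_comm _ _⟩ e) ^ (k e)) * F k := by
    intro J
    refine ((expand (fun e =>
      Sym2.lift ⟨fun x y => (if J x then (1 : ℂ) else -1) * (if J y then 1 else -1),
        fun x y => by exact mul_comm _ _⟩ e * ρ e)).1.of_norm).congr fun k => ?_
    simp only [hF, mul_pow, mul_div_assoc]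
    rw [Finset.prod_mul_distrib]
  have hRHS : (∑' k : {k : Sym2 A → ℕ // ∀ x : A, 2 ∣ ∑ e : Sym2 A, k e * edgeInc x e},
          ∏ e : Sym2 A, ρ e ^ (k.1 e) / ((k.1 e).factorial : ℂ))
      = ∑' k : Sym2 A → ℕ,
          if (∀ x : A, 2 ∣ ∑ e : Sym2 A, k e * edgeInc x e) then F k else 0 := by
    rw [show (∑' k : {k : Sym2 A → ℕ // ∀ x : A, 2 ∣ ∑ e : Sym2 A, k e * edgeInc x e},
          ∏ e : Sym2 A, ρ e ^ (k.1 e) / ((k.1 e).factorial : ℂ))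
        = ∑' k : ({k : Sym2 A → ℕ | ∀ x : A, 2 ∣ ∑ e : Sym2 A, k e * edgeInc x e} : Set _), F k.1
      from rfl, tsum_subtype]
    refine tsum_congr fun k => ?_
    by_cases h : ∀ x : A, 2 ∣ ∑ e : Sym2 A, k e * edgeInc x e <;>
      simp [Set.indicator_apply, Set.mem_setOf_eq, h]
  rw [hRHS, Finset.sum_congr rfl fun J _ => hexp J, ← Summable.tsum_finsetSum fun J _ => hJsum J,
    ← tsum_div_const]
  refine tsum_congr fun k => ?_
  rw [← Finset.sum_mul]
  have hsign : ∀ J : A → Bool,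
      (∏ e : Sym2 A,
        (Sym2.lift ⟨fun x y => (if J x then (1 : ℂ) else -1) * (if J y then 1 else -1),
          fun x y => by exact mul_comm _ _⟩ e) ^ (k e))
        = ∏ x : A, (if J x then (1 : ℂ) else -1) ^ (∑ e : Sym2 A, k e * edgeInc x e) :=
    fun J => signprod (fun x => if J x then (1 : ℂ) else -1) k
  rw [Finset.sum_congr rfl fun J _ => hsign J, hS k]
  by_cases h : ∀ x : A, 2 ∣ ∑ e : Sym2 A, k e * edgeInc x e
  · rw [if_pos h, if_pos h,
      mul_div_cancel_left₀ _ (pow_ne_zero _ (two_ne_zero (α := ℂ)))]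
  · rw [if_neg h, if_neg h, zero_mul, zero_div]
end
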